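/- arXiv:1405.2985 — 8 statements merged into one kernel-verified Lean document; each statement's English description precedes it below -/
import Mathlib

section
/- Let U, X, Y be Hilbert spaces, A : Y → X and B : U → X bounded linear operators. There exists a bounded linear operator X₀ : U → Y with A ∘ X₀ = B and ‖X₀‖ ≤ 1 if and only if B B* ≤ A A* (as positive operators on X). -/
open ContinuousLinearMap

section Aux

variable {U X Y : Type*}
    [NormedAddCommGroup U] [InnerProductSpace ℂ U] [CompleteSpace U]
    [NormedAddCommGroup X] [InnerProductSpace ℂ X] [CompleteSpace X]
    [NormedAddCommGroup Y] [InnerProductSpace ℂ Y] [CompleteSpace Y]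

local notation "⟪" x ", " y "⟫" => @inner ℂ _ _ x y

lemma douglas_key (A : Y →L[ℂ] X) (B : U →L[ℂ] X) (x : X) :
    (A ∘L ContinuousLinearMap.adjoint A - B ∘L ContinuousLinearMap.adjoint B).reApplyInnerSelf x
      = ‖ContinuousLinearMap.adjoint A x‖ ^ 2 - ‖ContinuousLinearMap.adjoint B x‖ ^ 2 := by
  have hA : ⟪A (ContinuousLinearMap.adjoint A x), x⟫
      = ⟪ContinuousLinearMap.adjoint A x, ContinuousLinearMap.adjoint A x⟫ := by
    rw [adjoint_inner_right]
  have hB : ⟪B (ContinuousLinearMap.adjoint B x), x⟫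
      = ⟪ContinuousLinearMap.adjoint B x, ContinuousLinearMap.adjoint B x⟫ := by
    rw [adjoint_inner_right]
  simp only [reApplyInnerSelf, sub_apply, comp_apply, inner_sub_left, map_sub, hA, hB]
  rw [inner_self_eq_norm_sq (𝕜 := ℂ), inner_self_eq_norm_sq (𝕜 := ℂ)]

lemma douglas_selfAdjoint (A : Y →L[ℂ] X) (B : U →L[ℂ] X) :
    IsSelfAdjoint (A ∘L ContinuousLinearMap.adjoint A - B ∘L ContinuousLinearMap.adjoint B) := by
  have hA : IsSelfAdjoint (A ∘L ContinuousLinearMap.adjoint A) := by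
    rw [ContinuousLinearMap.isSelfAdjoint_iff', adjoint_comp, adjoint_adjoint]
  have hB : IsSelfAdjoint (B ∘L ContinuousLinearMap.adjoint B) := by
    rw [ContinuousLinearMap.isSelfAdjoint_iff', adjoint_comp, adjoint_adjoint]
  exact hA.sub hB

/-- The hard direction: construction of the contraction `C : Y →L U` with
`C ∘ A† = B†`. -/
lemma douglas_construction (A : Y →L[ℂ] X) (B : U →L[ℂ] X)
    (hn : ∀ x : X, ‖ContinuousLinearMap.adjoint B x‖ ≤ ‖ContinuousLinearMap.adjoint A x‖) :
    ∃ C : Y →L[ℂ] U, (∀ x : X, C (ContinuousLinearMap.adjoint A x)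
      = ContinuousLinearMap.adjoint B x) ∧ ‖C‖ ≤ 1 := by
  classical
  set A' := ContinuousLinearMap.adjoint A with hA'
  set B' := ContinuousLinearMap.adjoint B with hB'
  -- well-definedness
  have wd : ∀ x x' : X, A' x = A' x' → B' x = B' x' := by
    intro x x' h
    have h2 := hn (x - x')
    rw [map_sub, map_sub, h, sub_self, norm_zero] at h2
    exact sub_eq_zero.mp (norm_le_zero_iff.mp h2)
  set p : Submodule ℂ Y := LinearMap.range (A' : X →ₗ[ℂ] Y) with hp
  have hmemp : ∀ x : X, A' x ∈ p := fun x => ⟨x, rfl⟩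
  -- a choice of preimage
  have pick_spec : ∀ y : p, A' (Classical.choose y.2) = (y : Y) := fun y =>
    Classical.choose_spec y.2
  set pick : p → X := fun y => Classical.choose y.2 with hpick
  -- the map on the range
  have wd' : ∀ (y : p) (x : X), A' x = (y : Y) → B' (pick y) = B' x := by
    intro y x hx
    exact wd _ _ (by rw [pick_spec y, hx])
  set f0 : p →ₗ[ℂ] U :=
    { toFun := fun y => B' (pick y)
      map_add' := by
        intro y z
        show B' (pick (y + z)) = B' (pick y) + B' (pick z)
        rw [wd' (y + z) (pick y + pick z) (by
          rw [map_add, pick_spec, pick_spec]; rfl)]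
        exact map_add B' _ _
      map_smul' := by
        intro c y
        show B' (pick (c • y)) = (RingHom.id ℂ) c • B' (pick y)
        rw [wd' (c • y) (c • pick y) (by
          rw [map_smul, pick_spec]; rfl)]
        simp [map_smul] } with hf0
  have hf0bound : ∀ y : p, ‖f0 y‖ ≤ 1 * ‖(y : Y)‖ := by
    intro y
    rw [one_mul]
    calc ‖B' (pick y)‖ ≤ ‖A' (pick y)‖ := hn _
      _ = ‖(y : Y)‖ := by rw [pick_spec]
  set f : p →L[ℂ] U := f0.mkContinuous 1 hf0bound with hf
  have hfnorm : ‖f‖ ≤ 1 := LinearMap.mkContinuous_norm_le f0 zero_le_one hf0bound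
  have hfeq : ∀ y : p, f y = B' (pick y) := fun _ => rfl
  -- the closure of the range
  set q : Submodule ℂ Y := p.topologicalClosure with hq
  haveI : CompleteSpace q := (Submodule.isClosed_topologicalClosure p).completeSpace_coe
  -- the inclusion
  set e : p →L[ℂ] q :=
    (Submodule.subtypeL p).codRestrict q (fun y => Submodule.le_topologicalClosure p y.2) with he
  have hd : DenseRange e := by
    refine Topology.IsInducing.subtypeVal.dense_iff.2 fun z => ?_
    have hz : (z : Y) ∈ closure (p : Set Y) := z.2
    refine closure_mono (fun y hy => ?_) hz
    exact ⟨e ⟨y, hy⟩, Set.mem_range_self _, rfl⟩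
  have hbound : ∀ y : p, ‖y‖ ≤ (1 : NNReal) * ‖e y‖ := by
    intro y
    simp only [NNReal.coe_one, one_mul]
    rfl
  set g : q →L[ℂ] U :=
    f.extend e with hg
  have hgnorm : ‖g‖ ≤ 1 := by
    have := opNorm_extend_le f hd hbound
    rw [NNReal.coe_one, one_mul] at this
    exact this.trans hfnorm
  have hgeq : ∀ y : p, g (e y) = f y := fun y => extend_eq f hd (isUniformEmbedding_of_bound e hbound).isUniformInducing y
  -- the full operator
  set C : Y →L[ℂ] U := g ∘L (q.orthogonalProjectionOnto : Y →L[ℂ] q) with hC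
  refine ⟨C, ?_, ?_⟩
  · intro x
    have hmem : A' x ∈ q := Submodule.le_topologicalClosure p (hmemp x)
    have hproj : q.orthogonalProjectionOnto (A' x) = ⟨A' x, hmem⟩ :=
      Submodule.orthogonalProjectionOnto_mem_subspace_eq_self (⟨A' x, hmem⟩ : q)
    have heq2 : (⟨A' x, hmem⟩ : q) = e ⟨A' x, hmemp x⟩ := rfl
    rw [hC, comp_apply, hproj, heq2, hgeq, hfeq]
    exact wd' ⟨A' x, hmemp x⟩ x rfl
  · calc ‖C‖ ≤ ‖g‖ * ‖(q.orthogonalProjectionOnto : Y →L[ℂ] q)‖ := opNorm_comp_le _ _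
      _ ≤ 1 * 1 := mul_le_mul hgnorm (Submodule.orthogonalProjectionOnto_norm_le (K := q)) (ContinuousLinearMap.opNorm_nonneg _) zero_le_one
      _ = 1 := one_mul 1

end Aux

/-- Douglas factorization with norm constraint. -/
theorem douglas_factorization_norm_constraint
    {U X Y : Type*}
    [NormedAddCommGroup U] [InnerProductSpace ℂ U] [CompleteSpace U]
    [NormedAddCommGroup X] [InnerProductSpace ℂ X] [CompleteSpace X]
    [NormedAddCommGroup Y] [InnerProductSpace ℂ Y] [CompleteSpace Y]
    (A : Y →L[ℂ] X) (B : U →L[ℂ] X) :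
    (∃ X₀ : U →L[ℂ] Y, A ∘L X₀ = B ∧ ‖X₀‖ ≤ 1) ↔
      (A ∘L ContinuousLinearMap.adjoint A - B ∘L ContinuousLinearMap.adjoint B).IsPositive := by
  constructor
  · rintro ⟨X₀, hX₀, hnorm⟩
    refine ⟨ContinuousLinearMap.isSelfAdjoint_iff_isSymmetric.mp (douglas_selfAdjoint A B), fun x => ?_⟩
    rw [douglas_key, sub_nonneg]
    have hadj : ContinuousLinearMap.adjoint B
        = ContinuousLinearMap.adjoint X₀ ∘L ContinuousLinearMap.adjoint A := by
      rw [← adjoint_comp, hX₀]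
    have h1 : ‖ContinuousLinearMap.adjoint B x‖ ≤ ‖ContinuousLinearMap.adjoint A x‖ := by
      rw [hadj]
      calc ‖ContinuousLinearMap.adjoint X₀ (ContinuousLinearMap.adjoint A x)‖
          ≤ ‖ContinuousLinearMap.adjoint X₀‖ * ‖ContinuousLinearMap.adjoint A x‖ :=
            le_opNorm _ _
        _ ≤ 1 * ‖ContinuousLinearMap.adjoint A x‖ := by
            apply mul_le_mul_of_nonneg_right _ (norm_nonneg _)
            rw [show ‖ContinuousLinearMap.adjoint X₀‖ = ‖X₀‖ from
              ContinuousLinearMap.adjoint.norm_map X₀]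
            exact hnorm
        _ = ‖ContinuousLinearMap.adjoint A x‖ := one_mul _
    exact pow_le_pow_left₀ (norm_nonneg _) h1 2
  · intro hpos
    have hn : ∀ x : X, ‖ContinuousLinearMap.adjoint B x‖ ≤ ‖ContinuousLinearMap.adjoint A x‖ := by
      intro x
      have h := hpos.2 x
      rw [douglas_key, sub_nonneg] at h
      nlinarith [norm_nonneg (ContinuousLinearMap.adjoint B x),
        norm_nonneg (ContinuousLinearMap.adjoint A x)]
    obtain ⟨C, hCeq, hCnorm⟩ := douglas_construction A B hn
    refine ⟨ContinuousLinearMap.adjoint C, ?_, ?_⟩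
    · have h1 : ContinuousLinearMap.adjoint (A ∘L ContinuousLinearMap.adjoint C)
          = ContinuousLinearMap.adjoint B := by
        rw [adjoint_comp, adjoint_adjoint]
        exact ContinuousLinearMap.ext fun x => hCeq x
      have h2 := congrArg ContinuousLinearMap.adjoint h1
      rwa [adjoint_adjoint, adjoint_adjoint] at h2
    · rw [show ‖ContinuousLinearMap.adjoint C‖ = ‖C‖ from
        ContinuousLinearMap.adjoint.norm_map C]
      exact hCnorm
end

section
/- Let U, X, Y be Hilbert spaces, A : Y → X, B : U → X bounded operators with B B* ≤ A A*, and let X₀ : U → Y be a bounded operator. Then A ∘ X₀ = B and ‖X₀‖ ≤ 1 holds if and only if the 3×3 block operator [[I_U, B*, X₀*], [B, A A*, A], [X₀, A*, I_Y]] on U ⊕ X ⊕ Y is positive semidefinite. -/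
open ContinuousLinearMap RCLike

private lemma norm_sq_eq_re_inner' {E : Type*} [NormedAddCommGroup E] [InnerProductSpace ℂ E]
    (v : E) : ‖v‖^2 = (inner ℂ v v : ℂ).re := (inner_self_eq_norm_sq (𝕜 := ℂ) v).symm

private lemma re_inner_symm' {E : Type*} [NormedAddCommGroup E] [InnerProductSpace ℂ E]
    (a b : E) : (inner ℂ a b : ℂ).re = (inner ℂ b a : ℂ).re := inner_re_symm (𝕜 := ℂ) a b

private lemma key_identity
    {U X Y : Type*}
    [NormedAddCommGroup U] [InnerProductSpace ℂ U] [CompleteSpace U]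
    [NormedAddCommGroup X] [InnerProductSpace ℂ X] [CompleteSpace X]
    [NormedAddCommGroup Y] [InnerProductSpace ℂ Y] [CompleteSpace Y]
    (A : Y →L[ℂ] X) (B : U →L[ℂ] X) (X₀ : U →L[ℂ] Y)
    (u : U) (x : X) (y : Y) :
    (inner ℂ (u + (adjoint B) x + (adjoint X₀) y) u
      + inner ℂ (B u + (A ∘L adjoint A) x + A y) x
      + inner ℂ (X₀ u + (adjoint A) x + y) y : ℂ).re
    = ‖X₀ u + (adjoint A) x + y‖^2 + ‖u‖^2 - ‖X₀ u‖^2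
      + 2 * (inner ℂ (B u - A (X₀ u)) x : ℂ).re := by
  rw [norm_sq_eq_re_inner' (X₀ u + (adjoint A) x + y), norm_sq_eq_re_inner' u,
    norm_sq_eq_re_inner' (X₀ u)]
  simp only [inner_add_left, inner_add_right, inner_sub_left, comp_apply,
    adjoint_inner_left, adjoint_inner_right, Complex.add_re, Complex.sub_re]
  simp only [map_add, inner_add_left, Complex.add_re]
  rw [re_inner_symm' x (A (X₀ u)), re_inner_symm' x (B u)]
  ring

/-- Characterization of solutions of `A X₀ = B`, `‖X₀‖ ≤ 1` via positivity of the 3×3 block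
operator `[[I, B*, X₀*], [B, AA*, A], [X₀, A*, I]]` on `U ⊕ X ⊕ Y`; the positivity of the block
operator is expressed through its quadratic form. -/
theorem solutions_iff_block_positive
    {U X Y : Type*}
    [NormedAddCommGroup U] [InnerProductSpace ℂ U] [CompleteSpace U]
    [NormedAddCommGroup X] [InnerProductSpace ℂ X] [CompleteSpace X]
    [NormedAddCommGroup Y] [InnerProductSpace ℂ Y] [CompleteSpace Y]
    (A : Y →L[ℂ] X) (B : U →L[ℂ] X) (X₀ : U →L[ℂ] Y)
    (hAB : (A ∘L ContinuousLinearMap.adjoint A - B ∘L ContinuousLinearMap.adjoint B).IsPositive) :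
    (A ∘L X₀ = B ∧ ‖X₀‖ ≤ 1) ↔
      (∀ (u : U) (x : X) (y : Y),
        0 ≤ (inner ℂ (u + (ContinuousLinearMap.adjoint B) x
                      + (ContinuousLinearMap.adjoint X₀) y) u
              + inner ℂ (B u + (A ∘L ContinuousLinearMap.adjoint A) x + A y) x
              + inner ℂ (X₀ u + (ContinuousLinearMap.adjoint A) x + y) y : ℂ).re) := by
  constructor
  · rintro ⟨hAX, hX⟩ u x y
    rw [key_identity]
    have hw : B u - A (X₀ u) = 0 := by
      rw [← hAX]; simp
    rw [hw, inner_zero_left, Complex.zero_re]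
    have h1 : ‖X₀ u‖ ≤ ‖u‖ := by
      refine le_trans (X₀.le_opNorm u) ?_
      nlinarith [norm_nonneg u]
    nlinarith [sq_nonneg ‖X₀ u + (adjoint A) x + y‖, norm_nonneg (X₀ u), norm_nonneg u]
  · intro h
    have hc : ∀ u : U, ‖X₀ u‖ ≤ ‖u‖ := by
      intro u
      have h1 := h u 0 (-(X₀ u))
      rw [key_identity] at h1
      have hv : X₀ u + (adjoint A) (0 : X) + (-(X₀ u)) = (0 : Y) := by
        simp
      rw [hv] at h1
      simp only [inner_zero_right, norm_zero, Complex.zero_re] at h1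
      nlinarith [norm_nonneg (X₀ u), norm_nonneg u]
    have hw0 : ∀ u : U, B u - A (X₀ u) = 0 := by
      intro u
      set w := B u - A (X₀ u) with hw
      by_contra hne
      have hwpos : 0 < ‖w‖ ^ 2 := pow_pos (norm_pos_iff.mpr hne) 2
      set t : ℝ := -(‖u‖ ^ 2 + 1) / (2 * ‖w‖ ^ 2) with ht
      have h1 := h u ((t : ℂ) • w) (-(X₀ u) - (adjoint A) ((t : ℂ) • w))
      rw [key_identity] at h1
      have hv : X₀ u + (adjoint A) ((t : ℂ) • w) + (-(X₀ u) - (adjoint A) ((t : ℂ) • w))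
          = (0 : Y) := by abel
      rw [hv, norm_zero] at h1
      have hin : (inner ℂ w ((t : ℂ) • w) : ℂ).re = t * ‖w‖ ^ 2 := by
        rw [inner_smul_right, Complex.mul_re]
        simp [norm_sq_eq_re_inner' w]
      rw [hin] at h1
      have hts : t * ‖w‖ ^ 2 = -(‖u‖ ^ 2 + 1) / 2 := by
        rw [ht]; field_simp
      rw [hts] at h1
      nlinarith [norm_nonneg (X₀ u)]
    constructor
    · ext u
      have := hw0 u
      simp only [comp_apply]
      have h2 : A (X₀ u) = B u := by
        have := sub_eq_zero.mp (hw0 u)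
        exact this.symm
      exact h2
    · refine X₀.opNorm_le_bound zero_le_one (fun u => ?_)
      rw [one_mul]
      exact hc u
end

section
/- Let X be a finite-dimensional Hilbert space, J a self-adjoint unitary (signature operator) on a Hilbert space K₀, C : X → K₀ a bounded operator, T : X → X, and P : X → X a strictly positive operator satisfying P − T* P T = C* J C. Suppose μ is a unimodular complex number with μ I − T* invertible. Define Θ(z) = I + (z − μ) C (I − z T)^{-1} P^{-1} (μ I − T*)^{-1} C* J for z in the unit disk. Then for all z, ζ in the unit disk, (J − Θ(z) J Θ(ζ)*)/(1 − z ζ̄) = C (I − z T)^{-1} P^{-1} (I − ζ̄ T*)^{-1} C*. -/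
open ContinuousLinearMap

lemma key_aux {R : Type*} [Ring R] [Algebra ℂ R]
    (T T' P S u v m m' A B M Mb Ab : R) (z ζw μ μw : ℂ)
    (hμμ : μ * μw = 1)
    (hu : u = 1 - z • T) (hv : v = 1 - ζw • T')
    (hm : m = μ • 1 - T') (hm' : m' = μw • 1 - T)
    (hS : S = P - T' * (P * T))
    (hAu : A * u = 1) (hvAb : v * Ab = 1)
    (hBP : B * P = 1) (hPB : P * B = 1)
    (hMm : M * m = 1) (hm'Mb : m' * Mb = 1) :
    (-(ζw - μw)) • (Mb * (B * Ab)) + (-(z - μ)) • (A * (B * M))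
      + (-((z - μ) * (ζw - μw))) • (A * (B * (M * (S * (Mb * (B * Ab))))))
      = (1 - z * ζw) • (A * (B * Ab)) := by
  have hμ0 : μ ≠ 0 := by
    intro h; rw [h, zero_mul] at hμμ; exact one_ne_zero hμμ.symm
  have hμw : μw = μ⁻¹ := eq_inv_of_mul_eq_one_left (by rw [mul_comm] at hμμ; exact hμμ)
  have c1 : ∀ x : R, M * (m * x) = x := fun x => by rw [← mul_assoc, hMm, one_mul]
  have c2 : ∀ x : R, B * (P * x) = x := fun x => by rw [← mul_assoc, hBP, one_mul]
  have c3 : ∀ x : R, A * (u * x) = x := fun x => by rw [← mul_assoc, hAu, one_mul]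
  have poly : (-(ζw - μw)) • (m * (P * u)) + (-(z - μ)) • (v * (P * m'))
      + (-((z - μ) * (ζw - μw))) • S = (1 - z * ζw) • (m * (P * m')) := by
    subst hu hv hm hm' hS hμw
    simp only [mul_sub, sub_mul, mul_one, one_mul, smul_sub, sub_smul, smul_smul,
      mul_smul_comm, smul_mul_assoc, mul_assoc]
    match_scalars
    · field_simp; ring
    · field_simp; ring
    · field_simp; ring
    · field_simp; ring
  have s1 := congrArg (fun q : R => M * q * Mb) poly
  simp only [mul_add, add_mul, mul_smul_comm, smul_mul_assoc, mul_assoc, c1, hm'Mb,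
    mul_one] at s1
  have s2 := congrArg (fun q : R => B * q * B) s1
  simp only [mul_add, add_mul, mul_smul_comm, smul_mul_assoc, mul_assoc, c2, hPB,
    mul_one] at s2
  have s3 := congrArg (fun q : R => A * q * Ab) s2
  simp only [mul_add, add_mul, mul_smul_comm, smul_mul_assoc, mul_assoc, c3, hvAb,
    mul_one] at s3
  exact s3


set_option maxHeartbeats 2000000 in
/-- The fundamental kernel identity for the resolvent-type function
`Θ(z) = I + (z - μ) C (I - zT)⁻¹ P⁻¹ (μI - T*)⁻¹ C* J` built from a strictly positive
solution `P` of the Stein equation `P - T* P T = C* J C`. -/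
theorem theta_kernel_identity
    {X K₀ : Type*}
    [NormedAddCommGroup X] [InnerProductSpace ℂ X] [FiniteDimensional ℂ X]
    [NormedAddCommGroup K₀] [InnerProductSpace ℂ K₀] [CompleteSpace K₀]
    (J : K₀ →L[ℂ] K₀) (hJsa : IsSelfAdjoint J) (hJ2 : J ∘L J = 1)
    (C : X →L[ℂ] K₀) (T : X →L[ℂ] X) (P : X →L[ℂ] X)
    (hPsa : IsSelfAdjoint P)
    (hPpos : ∃ c : ℝ, 0 < c ∧ ∀ x : X, c * ‖x‖ ^ 2 ≤ (inner ℂ (P x) x : ℂ).re)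
    (hStein : P - ContinuousLinearMap.adjoint T ∘L P ∘L T
        = ContinuousLinearMap.adjoint C ∘L J ∘L C)
    (μ : ℂ) (hμ : ‖μ‖ = 1)
    (hμT : IsUnit (μ • (1 : X →L[ℂ] X) - ContinuousLinearMap.adjoint T))
    (hres : ∀ z : ℂ, ‖z‖ < 1 → IsUnit ((1 : X →L[ℂ] X) - z • T))
    (Θ : ℂ → (K₀ →L[ℂ] K₀))
    (hΘ : ∀ z : ℂ, Θ z = 1 + (z - μ) •
      (C ∘L Ring.inverse ((1 : X →L[ℂ] X) - z • T) ∘L Ring.inverse P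
         ∘L Ring.inverse (μ • (1 : X →L[ℂ] X) - ContinuousLinearMap.adjoint T)
         ∘L ContinuousLinearMap.adjoint C ∘L J)) :
    ∀ z ζ : ℂ, ‖z‖ < 1 → ‖ζ‖ < 1 →
      J - Θ z ∘L J ∘L ContinuousLinearMap.adjoint (Θ ζ) =
        (1 - z * (starRingEnd ℂ) ζ) •
          (C ∘L Ring.inverse ((1 : X →L[ℂ] X) - z • T) ∘L Ring.inverse P
            ∘L Ring.inverse ((1 : X →L[ℂ] X) - ((starRingEnd ℂ) ζ) • ContinuousLinearMap.adjoint T)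
            ∘L ContinuousLinearMap.adjoint C) := by
  intro z ζ hz hζ
  obtain ⟨c, hc, hcp⟩ := hPpos
  -- μ has modulus one
  have hnormsq : Complex.normSq μ = 1 := by
    rw [← Complex.sq_norm, hμ, one_pow]
  have hμμ : μ * (starRingEnd ℂ) μ = 1 := by
    rw [Complex.mul_conj, hnormsq, Complex.ofReal_one]
  -- P is a unit
  have hker : ∀ x : X, P x = 0 → x = 0 := by
    intro x hx
    have h1 := hcp x
    rw [hx] at h1
    simp only [inner_zero_left, Complex.zero_re] at h1
    by_contra hne
    have h2 : 0 < ‖x‖ := norm_pos_iff.mpr hne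
    exact absurd h1 (not_le.mpr (mul_pos hc (pow_pos h2 2)))
  have hPinj : Function.Injective P := by
    intro x y hxy
    have h := hker (x - y) (by rw [map_sub, hxy, sub_self])
    exact sub_eq_zero.mp h
  have hPsurj : Function.Surjective P :=
    (LinearMap.injective_iff_surjective (f := (P : X →ₗ[ℂ] X))).mp hPinj
  have hP : IsUnit P := by
    let e : X ≃ₗ[ℂ] X := LinearEquiv.ofBijective (P : X →ₗ[ℂ] X) ⟨hPinj, hPsurj⟩
    refine ⟨⟨P, e.toContinuousLinearEquiv.symm.toContinuousLinearMap, ?_, ?_⟩, rfl⟩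
    · ext x
      exact e.apply_symm_apply x
    · ext x
      exact e.symm_apply_apply x
  -- units
  have hu : IsUnit ((1 : X →L[ℂ] X) - z • T) := hres z hz
  have hv : IsUnit ((1 : X →L[ℂ] X) - ((starRingEnd ℂ) ζ) • ContinuousLinearMap.adjoint T) := by
    have h := (hres ζ hζ).star
    simpa only [star_sub, star_one, star_smul, star_eq_adjoint, Complex.star_def] using h
  have hm' : IsUnit (((starRingEnd ℂ) μ) • (1 : X →L[ℂ] X) - T) := by
    have h := hμT.star
    simpa only [star_sub, star_smul, star_one, star_eq_adjoint, adjoint_adjoint,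
      Complex.star_def] using h
  -- adjoints of inverses
  have hJ' : ContinuousLinearMap.adjoint J = J := isSelfAdjoint_iff'.mp hJsa
  have hBadj : ContinuousLinearMap.adjoint (Ring.inverse P) = Ring.inverse P := by
    rw [← star_eq_adjoint, ← Ring.inverse_star, hPsa.star_eq]
  have hMadj : ContinuousLinearMap.adjoint
      (Ring.inverse (μ • (1 : X →L[ℂ] X) - ContinuousLinearMap.adjoint T))
      = Ring.inverse (((starRingEnd ℂ) μ) • (1 : X →L[ℂ] X) - T) := by
    rw [← star_eq_adjoint, ← Ring.inverse_star]
    congr 1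
    simp only [star_sub, star_smul, star_one, star_eq_adjoint, adjoint_adjoint,
      Complex.star_def]
  have hAadj : ContinuousLinearMap.adjoint (Ring.inverse ((1 : X →L[ℂ] X) - ζ • T))
      = Ring.inverse ((1 : X →L[ℂ] X) - ((starRingEnd ℂ) ζ) • ContinuousLinearMap.adjoint T) := by
    rw [← star_eq_adjoint, ← Ring.inverse_star]
    congr 1
    simp only [star_sub, star_smul, star_one, star_eq_adjoint, Complex.star_def]
  -- the adjoint of Θ ζ
  have hΘζ : ContinuousLinearMap.adjoint (Θ ζ)
      = 1 + ((starRingEnd ℂ) ζ - (starRingEnd ℂ) μ) •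
        (J ∘L C ∘L Ring.inverse (((starRingEnd ℂ) μ) • (1 : X →L[ℂ] X) - T)
          ∘L Ring.inverse P
          ∘L Ring.inverse ((1 : X →L[ℂ] X) - ((starRingEnd ℂ) ζ) • ContinuousLinearMap.adjoint T)
          ∘L ContinuousLinearMap.adjoint C) := by
    rw [← star_eq_adjoint, hΘ ζ, star_add, star_one, star_smul]
    congr 1
    · congr 1
      · simp only [Complex.star_def, map_sub]
      · rw [star_eq_adjoint]
        simp only [adjoint_comp, adjoint_adjoint, hJ', hBadj, hMadj, hAadj, comp_assoc]
  -- helper rewriting lemmas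
  have hJ2' : ∀ f : K₀ →L[ℂ] K₀, J ∘L (J ∘L f) = f := fun f => by
    rw [← comp_assoc, hJ2, one_def, id_comp]
  have hSt' : ∀ f : K₀ →L[ℂ] X,
      ContinuousLinearMap.adjoint C ∘L (J ∘L (C ∘L f))
        = P ∘L f - ContinuousLinearMap.adjoint T ∘L (P ∘L (T ∘L f)) := by
    intro f
    have h := congrArg (fun Q : X →L[ℂ] X => Q ∘L f) hStein
    simp only [sub_comp, comp_assoc] at h
    exact h.symm
  -- the key algebraic identity
  have key := key_aux (R := X →L[ℂ] X) T (ContinuousLinearMap.adjoint T) P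
    (P - ContinuousLinearMap.adjoint T ∘L P ∘L T)
    ((1 : X →L[ℂ] X) - z • T)
    ((1 : X →L[ℂ] X) - ((starRingEnd ℂ) ζ) • ContinuousLinearMap.adjoint T)
    (μ • (1 : X →L[ℂ] X) - ContinuousLinearMap.adjoint T)
    (((starRingEnd ℂ) μ) • (1 : X →L[ℂ] X) - T)
    (Ring.inverse ((1 : X →L[ℂ] X) - z • T)) (Ring.inverse P)
    (Ring.inverse (μ • (1 : X →L[ℂ] X) - ContinuousLinearMap.adjoint T))
    (Ring.inverse (((starRingEnd ℂ) μ) • (1 : X →L[ℂ] X) - T))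
    (Ring.inverse ((1 : X →L[ℂ] X) - ((starRingEnd ℂ) ζ) • ContinuousLinearMap.adjoint T))
    z ((starRingEnd ℂ) ζ) μ ((starRingEnd ℂ) μ) hμμ rfl rfl rfl rfl rfl
    (Ring.inverse_mul_cancel _ hu) (Ring.mul_inverse_cancel _ hv)
    (Ring.inverse_mul_cancel _ hP) (Ring.mul_inverse_cancel _ hP)
    (Ring.inverse_mul_cancel _ hμT) (Ring.mul_inverse_cancel _ hm')
  have keyC := congrArg
    (fun Q : X →L[ℂ] X => C ∘L Q ∘L ContinuousLinearMap.adjoint C) key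
  rw [hΘ z, hΘζ]
  simp only [comp_add, add_comp, smul_comp, comp_smul, one_def, id_comp, comp_id,
    comp_assoc, mul_def, sub_comp, comp_sub, hJ2, hJ2', hSt'] at keyC ⊢
  rw [← keyC]
  module
end

section
/- Let H be a reproducing kernel Hilbert space of Y-valued functions on a set Ω with L(Y)-valued reproducing kernel K, and let F : Ω → Y be a function, γ > 0. Then F belongs to H with ‖F‖_H ≤ γ if and only if the kernel (ω, ζ) ↦ K(ω, ζ) − γ^{-2} F(ω) ⊗ F(ζ)* is a positive kernel on Ω × Ω, i.e., Σ_{i,j} ⟨(K(ω_i, ω_j) − γ^{-2} F(ω_i)⟨·, F(ω_j)⟩) y_j, y_i⟩ ≥ 0 for all finite tuples of points ω_i ∈ Ω and vectors y_i ∈ Y. -/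
open scoped InnerProductSpace ComplexConjugate

private lemma rkhs_aux_sum_eq {Ω Y H : Type*}
    [NormedAddCommGroup Y] [InnerProductSpace ℂ Y]
    [NormedAddCommGroup H] [InnerProductSpace ℂ H]
    (K : Ω → Ω → (Y →L[ℂ] Y)) (kfun : Ω → Y → H)
    (hkk : ∀ (ω ζ : Ω) (y y' : Y), ⟪kfun ω y, kfun ζ y'⟫_ℂ = ⟪y, K ω ζ y'⟫_ℂ)
    (F : Ω → Y) (γ : ℝ)
    (n : ℕ) (ω : Fin n → Ω) (y : Fin n → Y) :
    (∑ i : Fin n, ∑ j : Fin n,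
          (⟪y i, K (ω i) (ω j) (y j)⟫_ℂ
            - ((γ : ℂ) ^ 2)⁻¹ * (⟪F (ω j), y j⟫_ℂ * ⟪y i, F (ω i)⟫_ℂ))).re
      = ‖∑ i : Fin n, kfun (ω i) (y i)‖ ^ 2
          - (γ ^ 2)⁻¹ * ‖∑ i : Fin n, ⟪y i, F (ω i)⟫_ℂ‖ ^ 2 := by
  set s := ∑ i : Fin n, kfun (ω i) (y i) with hs
  set c := ∑ i : Fin n, ⟪y i, F (ω i)⟫_ℂ with hc
  have h1 : ∑ i : Fin n, ∑ j : Fin n, ⟪y i, K (ω i) (ω j) (y j)⟫_ℂ = ⟪s, s⟫_ℂ := by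
    simp only [hs, sum_inner, inner_sum, hkk]
    exact Finset.sum_comm
  have h2 : ∑ i : Fin n, ∑ j : Fin n, (⟪F (ω j), y j⟫_ℂ * ⟪y i, F (ω i)⟫_ℂ)
      = ((‖c‖ : ℂ)) ^ 2 := by
    have e1 : ∑ i : Fin n, ∑ j : Fin n, (⟪F (ω j), y j⟫_ℂ * ⟪y i, F (ω i)⟫_ℂ)
        = (∑ j : Fin n, ⟪F (ω j), y j⟫_ℂ) * c := by
      rw [Finset.sum_mul_sum]
      exact Finset.sum_comm
    have e2 : (∑ j : Fin n, ⟪F (ω j), y j⟫_ℂ) = conj c := by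
      rw [hc, map_sum]
      simp [inner_conj_symm]
    rw [e1, e2, RCLike.conj_mul]
    norm_cast
  have h3 : (∑ i : Fin n, ∑ j : Fin n,
          (⟪y i, K (ω i) (ω j) (y j)⟫_ℂ
            - ((γ : ℂ) ^ 2)⁻¹ * (⟪F (ω j), y j⟫_ℂ * ⟪y i, F (ω i)⟫_ℂ)))
      = (∑ i : Fin n, ∑ j : Fin n, ⟪y i, K (ω i) (ω j) (y j)⟫_ℂ)
        - ((γ : ℂ) ^ 2)⁻¹ * (∑ i : Fin n, ∑ j : Fin n,
            (⟪F (ω j), y j⟫_ℂ * ⟪y i, F (ω i)⟫_ℂ)) := by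
    simp [Finset.sum_sub_distrib, Finset.mul_sum]
  have h4 : (((γ : ℂ) ^ 2)⁻¹ * (‖c‖ : ℂ) ^ 2) = (((γ ^ 2)⁻¹ * ‖c‖ ^ 2 : ℝ) : ℂ) := by
    push_cast; ring
  have h5 : (⟪s, s⟫_ℂ).re = ‖s‖ ^ 2 := by
    rw [← RCLike.re_to_complex]; exact inner_self_eq_norm_sq s
  rw [h3, h1, h2, h4, Complex.sub_re, Complex.ofReal_re, h5]

/-- Norm-constrained membership in a vector-valued RKHS: `F` belongs to the RKHS `H`
(realized by the linear point-evaluation map `Jmap : H →ₗ (Ω → Y)` with kernel elements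
`kfun ζ y` having the reproducing property) with norm at most `γ` if and only if the
kernel `K(ω,ζ) - γ⁻² F(ω) F(ζ)*` is a positive kernel on `Ω × Ω`. -/
theorem mem_RKHS_norm_le_iff_kernel_positive
    {Ω : Type*} {Y H : Type*}
    [NormedAddCommGroup Y] [InnerProductSpace ℂ Y] [CompleteSpace Y]
    [NormedAddCommGroup H] [InnerProductSpace ℂ H] [CompleteSpace H]
    (Jmap : H →ₗ[ℂ] (Ω → Y))
    (K : Ω → Ω → (Y →L[ℂ] Y)) (kfun : Ω → Y → H)
    (hker : ∀ (ζ : Ω) (y : Y), Jmap (kfun ζ y) = fun ω => K ω ζ y)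
    (hrepr : ∀ (f : H) (ζ : Ω) (y : Y), ⟪kfun ζ y, f⟫_ℂ = ⟪y, Jmap f ζ⟫_ℂ)
    (hdense : Dense ((Submodule.span ℂ
        (Set.range fun p : Ω × Y => kfun p.1 p.2) : Submodule ℂ H) : Set H))
    (F : Ω → Y) (γ : ℝ) (hγ : 0 < γ) :
    (∃ f : H, Jmap f = F ∧ ‖f‖ ≤ γ) ↔
      ∀ (n : ℕ) (ω : Fin n → Ω) (y : Fin n → Y),
        0 ≤ (∑ i : Fin n, ∑ j : Fin n,
          (⟪y i, K (ω i) (ω j) (y j)⟫_ℂ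
            - ((γ : ℂ) ^ 2)⁻¹ * (⟪F (ω j), y j⟫_ℂ * ⟪y i, F (ω i)⟫_ℂ))).re := by
  classical
  have hkk : ∀ (ω ζ : Ω) (y y' : Y), ⟪kfun ω y, kfun ζ y'⟫_ℂ = ⟪y, K ω ζ y'⟫_ℂ := by
    intro ω ζ y y'
    rw [hrepr, hker]
  have hk_smul : ∀ (ζ : Ω) (a : ℂ) (y : Y), kfun ζ (a • y) = a • kfun ζ y := by
    intro ζ a y
    have h : ∀ f : H, ⟪kfun ζ (a • y) - a • kfun ζ y, f⟫_ℂ = 0 := by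
      intro f
      rw [inner_sub_left, inner_smul_left, hrepr, hrepr, inner_smul_left, sub_self]
    have h2 := h (kfun ζ (a • y) - a • kfun ζ y)
    rw [inner_self_eq_zero, sub_eq_zero] at h2
    exact h2
  constructor
  · rintro ⟨f, hf, hnorm⟩ n ω y
    rw [rkhs_aux_sum_eq K kfun hkk F γ n ω y]
    set s := ∑ i : Fin n, kfun (ω i) (y i) with hs
    have hc : (∑ i : Fin n, ⟪y i, F (ω i)⟫_ℂ) = ⟪s, f⟫_ℂ := by
      rw [hs, sum_inner]
      refine Finset.sum_congr rfl fun i _ => ?_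
      rw [hrepr, hf]
    rw [hc]
    have hCS : ‖⟪s, f⟫_ℂ‖ ≤ ‖s‖ * ‖f‖ := norm_inner_le_norm s f
    have hb : ‖⟪s, f⟫_ℂ‖ ≤ ‖s‖ * γ :=
      hCS.trans (mul_le_mul_of_nonneg_left hnorm (norm_nonneg s))
    have h2 : ‖⟪s, f⟫_ℂ‖ ^ 2 ≤ (‖s‖ * γ) ^ 2 :=
      pow_le_pow_left₀ (norm_nonneg _) hb 2
    have hγ2 : (0:ℝ) < γ ^ 2 := by positivity
    rw [sub_nonneg, inv_mul_le_iff₀ hγ2]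
    nlinarith
  · intro hpos
    set g : Ω × Y → H := fun p => kfun p.1 p.2 with hg
    set T : ((Ω × Y) →₀ ℂ) →ₗ[ℂ] H := Finsupp.linearCombination ℂ g with hT
    set M : ((Ω × Y) →₀ ℂ) →ₗ[ℂ] ℂ :=
      Finsupp.linearCombination ℂ (fun p : Ω × Y => ⟪F p.1, p.2⟫_ℂ) with hM
    -- key bound
    have hbound : ∀ l : (Ω × Y) →₀ ℂ, ‖M l‖ ≤ γ * ‖T l‖ := by
      intro l
      have hp := hpos l.support.card
        (fun i => ((l.support.equivFin.symm i : Ω × Y)).1)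
        (fun i => l (l.support.equivFin.symm i : Ω × Y) •
          ((l.support.equivFin.symm i : Ω × Y)).2)
      rw [rkhs_aux_sum_eq K kfun hkk F γ] at hp
      have hS : (∑ i : Fin l.support.card,
          kfun ((l.support.equivFin.symm i : Ω × Y)).1
            (l (l.support.equivFin.symm i : Ω × Y) •
              ((l.support.equivFin.symm i : Ω × Y)).2)) = T l := by
        rw [hT, Finsupp.linearCombination_apply, Finsupp.sum,
          ← Finset.sum_coe_sort l.support (fun p => l p • g p)]
        refine (Fintype.sum_equiv l.support.equivFin
          (fun x : l.support => l (x : Ω × Y) • g (x : Ω × Y)) _ fun x => ?_).symm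
        rw [hk_smul]
        simp [hg]
      have hC : (∑ i : Fin l.support.card,
          ⟪l (l.support.equivFin.symm i : Ω × Y) •
              ((l.support.equivFin.symm i : Ω × Y)).2,
            F ((l.support.equivFin.symm i : Ω × Y)).1⟫_ℂ) = conj (M l) := by
        rw [hM, Finsupp.linearCombination_apply, Finsupp.sum, map_sum,
          ← Finset.sum_coe_sort l.support (fun p => conj (l p • ⟪F p.1, p.2⟫_ℂ))]
        refine (Fintype.sum_equiv l.support.equivFin
          (fun x : l.support => conj (l (x : Ω × Y) • ⟪F (x : Ω × Y).1, (x : Ω × Y).2⟫_ℂ))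
          _ fun x => ?_).symm
        rw [inner_smul_left]
        simp [Equiv.symm_apply_apply]
      rw [hS, hC, RCLike.norm_conj] at hp
      have hγ2 : (0:ℝ) < γ ^ 2 := by positivity
      rw [sub_nonneg, inv_mul_le_iff₀ hγ2] at hp
      nlinarith [norm_nonneg (M l), norm_nonneg (T l), mul_nonneg hγ.le (norm_nonneg (T l))]
    -- factor M through range of T
    have hker_le : LinearMap.ker T ≤ LinearMap.ker M := by
      intro l hl
      rw [LinearMap.mem_ker] at hl ⊢
      have := hbound l
      rw [hl, norm_zero, mul_zero] at this
      exact norm_le_zero_iff.mp this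
    set L₀ : (LinearMap.range T) →ₗ[ℂ] ℂ :=
      ((LinearMap.ker T).liftQ M hker_le).comp
        (T.quotKerEquivRange.symm : (LinearMap.range T) →ₗ[ℂ] ((Ω × Y) →₀ ℂ) ⧸ LinearMap.ker T)
      with hL₀
    have hL₀app : ∀ (l : (Ω × Y) →₀ ℂ) (hm : T l ∈ LinearMap.range T),
        L₀ ⟨T l, hm⟩ = M l := by
      intro l hm
      rw [hL₀]
      simp only [LinearMap.coe_comp, Function.comp_apply, LinearEquiv.coe_coe]
      rw [T.quotKerEquivRange_symm_apply_image l hm]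
      simp [Submodule.liftQ_apply]
    have hL₀bound : ∀ v : LinearMap.range T, ‖L₀ v‖ ≤ γ * ‖(v : H)‖ := by
      rintro ⟨v, hv⟩
      obtain ⟨l, rfl⟩ := hv
      show ‖L₀ ⟨T l, LinearMap.mem_range_self T l⟩‖ ≤ γ * ‖T l‖
      rw [hL₀app l]
      exact hbound l
    set L₁ : (LinearMap.range T) →L[ℂ] ℂ := LinearMap.mkContinuous L₀ γ hL₀bound with hL₁
    have hL₁norm : ‖L₁‖ ≤ γ := LinearMap.mkContinuous_norm_le L₀ hγ.le hL₀bound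
    set eT : (LinearMap.range T) →L[ℂ] H := (LinearMap.range T).subtypeL with heT
    have h_e : ∀ x : LinearMap.range T, ‖x‖ ≤ (1 : NNReal) * ‖eT x‖ := by
      intro x; simp [heT]
    have h_dense : DenseRange eT := by
      have hr : LinearMap.range T = Submodule.span ℂ (Set.range g) :=
        Finsupp.range_linearCombination ℂ
      have : Set.range eT = ((LinearMap.range T : Submodule ℂ H) : Set H) := by
        rw [heT]
        exact Subtype.range_val
      rw [DenseRange, this, hr]
      exact hdense
    set L' : H →L[ℂ] ℂ :=
      L₁.extend eT
      with hL'
    have hL'norm : ‖L'‖ ≤ γ := by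
      have := ContinuousLinearMap.opNorm_extend_le (f := L₁) (e := eT) h_dense h_e
      rw [← hL'] at this
      simpa using this.trans (by simpa using hL₁norm)
    set f : H := (InnerProductSpace.toDual ℂ H).symm L' with hf
    refine ⟨f, ?_, ?_⟩
    · have hfk : ∀ (ζ : Ω) (v : Y), ⟪f, kfun ζ v⟫_ℂ = ⟪F ζ, v⟫_ℂ := by
        intro ζ v
        have h1 : ⟪f, kfun ζ v⟫_ℂ = L' (kfun ζ v) := InnerProductSpace.toDual_symm_apply
        have hmem : kfun ζ v ∈ LinearMap.range T := by
          refine ⟨Finsupp.single (ζ, v) 1, ?_⟩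
          rw [hT, Finsupp.linearCombination_single, one_smul]
        have h2 : eT ⟨kfun ζ v, hmem⟩ = kfun ζ v := rfl
        have h3 : L' (kfun ζ v) = L₁ ⟨kfun ζ v, hmem⟩ :=
          ContinuousLinearMap.extend_eq L₁ h_dense
            (ContinuousLinearMap.isUniformEmbedding_of_bound eT h_e).isUniformInducing ⟨kfun ζ v, hmem⟩
        have h4 : L₁ ⟨kfun ζ v, hmem⟩ = M (Finsupp.single (ζ, v) 1) := by
          have hTs : T (Finsupp.single (ζ, v) 1) = kfun ζ v := by
            rw [hT, Finsupp.linearCombination_single, one_smul]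
          have : (⟨kfun ζ v, hmem⟩ : LinearMap.range T)
              = ⟨T (Finsupp.single (ζ, v) 1), hTs ▸ hmem⟩ := by
            exact Subtype.ext hTs.symm
          rw [hL₁]
          show L₀ _ = _
          rw [this, hL₀app]
        rw [h1, h3, h4, hM, Finsupp.linearCombination_single, one_smul]
      funext ζ
      refine ext_inner_left ℂ fun v => ?_
      rw [← hrepr f ζ v, ← inner_conj_symm (kfun ζ v) f, hfk, inner_conj_symm]
    · calc ‖f‖ = ‖L'‖ := LinearIsometryEquiv.norm_map _ _
        _ ≤ γ := hL'norm
end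

section
/- Let S : 𝔻 → ℂ be a holomorphic function on the open unit disk with |S(z)| ≤ 1 for all z. Then the de Branges–Rovnyak kernel K_S(z, ζ) = (1 − S(z) conj(S(ζ)))/(1 − z conj(ζ)) is a positive kernel on 𝔻 × 𝔻: for any finite points z₁,…,z_n ∈ 𝔻 and scalars c₁,…,c_n, Σ_{i,j} K_S(z_i, z_j) c_j conj(c_i) ≥ 0. -/
open scoped ComplexConjugate
open Complex Metric

lemma dbr_repro {r : ℝ} {g : ℂ → ℂ}
    (hg : DiffContOnCl ℂ g (ball (0 : ℂ) r)) {ζ : ℂ} (hζ : ‖ζ‖ < r) :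
    ∫ θ in (0:ℝ)..(2*Real.pi),
        g (circleMap 0 r θ) * (circleMap 0 r θ / (circleMap 0 r θ - ζ))
      = ((2*Real.pi : ℝ) : ℂ) * g ζ := by
  have hmem : ζ ∈ ball (0 : ℂ) r := by simpa [mem_ball_zero_iff] using hζ
  have h := hg.circleIntegral_sub_inv_smul hmem
  rw [circleIntegral] at h
  have h2 : ∫ θ in (0:ℝ)..(2*Real.pi),
      (-I) * (deriv (circleMap 0 r) θ • ((circleMap 0 r θ - ζ)⁻¹ • g (circleMap 0 r θ)))
      = (-I) * ((2 * Real.pi * I : ℂ) • g ζ) := by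
    rw [intervalIntegral.integral_const_mul, h]
  have h3 : ∀ θ : ℝ,
      (-I) * (deriv (circleMap 0 r) θ • ((circleMap 0 r θ - ζ)⁻¹ • g (circleMap 0 r θ)))
      = g (circleMap 0 r θ) * (circleMap 0 r θ / (circleMap 0 r θ - ζ)) := by
    intro θ
    simp only [deriv_circleMap, smul_eq_mul, div_eq_mul_inv]
    have : (-I) * I = 1 := by simp [Complex.I_mul_I]
    ring_nf
    rw [Complex.I_sq]
    ring
  have h4 : ∫ θ in (0:ℝ)..(2*Real.pi),
      g (circleMap 0 r θ) * (circleMap 0 r θ / (circleMap 0 r θ - ζ))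
      = ∫ θ in (0:ℝ)..(2*Real.pi),
      (-I) * (deriv (circleMap 0 r) θ • ((circleMap 0 r θ - ζ)⁻¹ • g (circleMap 0 r θ))) :=
    intervalIntegral.integral_congr (fun θ _ => (h3 θ).symm)
  rw [h4, h2]
  simp [smul_eq_mul]
  ring_nf
  rw [Complex.I_sq]
  ring

lemma dbr_bilin {r : ℝ} (hr0 : 0 < r) {n : ℕ} {z : Fin n → ℂ} (hz : ∀ i, ‖z i‖ < r)
    {Φ : ℂ → ℂ} (hΦ : DiffContOnCl ℂ Φ (ball (0:ℂ) r)) (d e : Fin n → ℂ) :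
    ∫ θ in (0:ℝ)..(2*Real.pi),
        Φ (circleMap 0 r θ)
          * (∑ j, d j * ((r:ℂ)^2 / ((r:ℂ)^2 - circleMap 0 r θ * conj (z j))))
          * (∑ i, e i * (circleMap 0 r θ / (circleMap 0 r θ - z i)))
      = ((2*Real.pi : ℝ) : ℂ) * ∑ i, ∑ j, e i * d j
          * (Φ (z i) * ((r:ℂ)^2 / ((r:ℂ)^2 - z i * conj (z j)))) := by
  set m := circleMap 0 r with hm
  have hmnorm : ∀ θ, ‖m θ‖ = r := by
    intro θ
    simp [hm, norm_circleMap_zero, abs_of_pos hr0]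
  have hne : ∀ (j : Fin n), ∀ w : ℂ, ‖w‖ ≤ r → (r:ℂ)^2 - w * conj (z j) ≠ 0 := by
    intro j w hw
    have h1 : ‖w * conj (z j)‖ < ‖((r:ℂ))^2‖ := by
      rw [norm_mul, norm_pow, Complex.norm_real, Real.norm_eq_abs, abs_of_pos hr0,
        RCLike.norm_conj]
      calc ‖w‖ * ‖z j‖ ≤ r * ‖z j‖ := by
            exact mul_le_mul_of_nonneg_right hw (norm_nonneg _)
        _ < r * r := by
            exact mul_lt_mul_of_pos_left (hz j) hr0
        _ = r^2 := (sq r).symm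
    exact sub_ne_zero.mpr (fun h => absurd h1 (by rw [← h]; exact lt_irrefl _))
  have hQ : ∀ j : Fin n, DiffContOnCl ℂ
      (fun w => (r:ℂ)^2 / ((r:ℂ)^2 - w * conj (z j))) (ball (0:ℂ) r) := by
    intro j
    apply DifferentiableOn.diffContOnCl
    rw [closure_ball (0:ℂ) hr0.ne']
    apply DifferentiableOn.div (differentiableOn_const _)
    · exact (differentiableOn_const _).sub ((differentiable_id.mul_const _).differentiableOn)
    · intro w hw
      exact hne j w (by simpa [mem_closedBall, dist_zero_right] using hw)
  have hg : ∀ j : Fin n, DiffContOnCl ℂ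
      (fun w => Φ w * ((r:ℂ)^2 / ((r:ℂ)^2 - w * conj (z j)))) (ball (0:ℂ) r) :=
    fun j => ⟨hΦ.differentiableOn.mul (hQ j).differentiableOn,
      hΦ.continuousOn.mul (hQ j).continuousOn⟩
  -- continuity of per-term integrands
  have hmapscl : ∀ θ, m θ ∈ closure (ball (0:ℂ) r) := by
    intro θ
    rw [closure_ball (0:ℂ) hr0.ne']
    rw [mem_closedBall, dist_zero_right]
    exact (hmnorm θ).le
  have hcm : Continuous m := continuous_circleMap 0 r
  have hcΦ : Continuous fun θ => Φ (m θ) :=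
    hΦ.continuousOn.comp_continuous hcm hmapscl
  have hcQ : ∀ j : Fin n, Continuous fun θ => (r:ℂ)^2 / ((r:ℂ)^2 - m θ * conj (z j)) := by
    intro j
    exact continuous_const.div ((continuous_const.sub (hcm.mul continuous_const)))
      (fun θ => hne j (m θ) (hmnorm θ).le)
  have hcP : ∀ i : Fin n, Continuous fun θ => m θ / (m θ - z i) := by
    intro i
    refine hcm.div (hcm.sub continuous_const) (fun θ => sub_ne_zero.mpr ?_)
    intro h
    exact absurd (hmnorm θ) (by rw [h]; exact (hz i).ne)
  have hcterm : ∀ (i j : Fin n), Continuous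
      (fun θ => (e i * d j) * ((Φ (m θ) * ((r:ℂ)^2 / ((r:ℂ)^2 - m θ * conj (z j))))
        * (m θ / (m θ - z i)))) :=
    fun i j => continuous_const.mul ((hcΦ.mul (hcQ j)).mul (hcP i))
  have hintg : ∀ (i j : Fin n), IntervalIntegrable
      (fun θ => (e i * d j) * ((Φ (m θ) * ((r:ℂ)^2 / ((r:ℂ)^2 - m θ * conj (z j))))
        * (m θ / (m θ - z i)))) MeasureTheory.volume 0 (2*Real.pi) :=
    fun i j => (hcterm i j).intervalIntegrable _ _
  have hpt : ∀ θ : ℝ,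
      Φ (m θ) * (∑ j, d j * ((r:ℂ)^2 / ((r:ℂ)^2 - m θ * conj (z j))))
          * (∑ i, e i * (m θ / (m θ - z i)))
      = ∑ i, ∑ j, (e i * d j) * ((Φ (m θ) * ((r:ℂ)^2 / ((r:ℂ)^2 - m θ * conj (z j))))
          * (m θ / (m θ - z i))) := by
    intro θ
    rw [mul_assoc, Finset.sum_mul_sum]
    simp only [Finset.mul_sum]
    rw [Finset.sum_comm]
    exact Finset.sum_congr rfl fun i _ => Finset.sum_congr rfl fun j _ => by ring
  have h1 : ∫ θ in (0:ℝ)..(2*Real.pi),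
        Φ (m θ) * (∑ j, d j * ((r:ℂ)^2 / ((r:ℂ)^2 - m θ * conj (z j))))
          * (∑ i, e i * (m θ / (m θ - z i)))
      = ∑ i, ∑ j, ∫ θ in (0:ℝ)..(2*Real.pi),
          (e i * d j) * ((Φ (m θ) * ((r:ℂ)^2 / ((r:ℂ)^2 - m θ * conj (z j))))
            * (m θ / (m θ - z i))) := by
    rw [intervalIntegral.integral_congr (fun θ _ => hpt θ)]
    rw [intervalIntegral.integral_finset_sum (f := fun i (θ:ℝ) => ∑ j,
      (e i * d j) * ((Φ (m θ) * ((r:ℂ)^2 / ((r:ℂ)^2 - m θ * conj (z j))))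
        * (m θ / (m θ - z i))))
      (fun i _ => ((continuous_finset_sum _ (fun j _ => hcterm i j)).intervalIntegrable _ _))]
    exact Finset.sum_congr rfl fun i _ =>
      intervalIntegral.integral_finset_sum (fun j _ => hintg i j)
  rw [h1]
  rw [Finset.mul_sum]
  refine Finset.sum_congr rfl fun i _ => ?_
  rw [Finset.mul_sum]
  refine Finset.sum_congr rfl fun j _ => ?_
  rw [intervalIntegral.integral_const_mul, dbr_repro (hg j) (hz i)]
  ring

lemma dbr_key (S : ℂ → ℂ) (hS : DifferentiableOn ℂ S (ball (0:ℂ) 1))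
    (hSb : ∀ w ∈ ball (0:ℂ) 1, ‖S w‖ ≤ 1)
    {r : ℝ} (hr0 : 0 < r) (hr1 : r < 1)
    {n : ℕ} {z : Fin n → ℂ} (hz : ∀ i, ‖z i‖ < r) (c : Fin n → ℂ) :
    0 ≤ (∑ i, ∑ j, (1 - S (z i) * conj (S (z j))) * c j * conj (c i)
      * ((r:ℂ)^2 / ((r:ℂ)^2 - z i * conj (z j)))).re := by
  set m := circleMap 0 r with hm
  have hmnorm : ∀ θ, ‖m θ‖ = r := by
    intro θ
    simp [hm, norm_circleMap_zero, abs_of_pos hr0]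
  have hmball : ∀ θ, m θ ∈ ball (0:ℂ) 1 := by
    intro θ
    rw [mem_ball_zero_iff, hmnorm θ]; exact hr1
  have hsub : closure (ball (0:ℂ) r) ⊆ ball (0:ℂ) 1 := by
    rw [closure_ball (0:ℂ) hr0.ne']
    exact fun w hw => lt_of_le_of_lt (by simpa [mem_closedBall, dist_zero_right] using hw) hr1
      |> fun h => mem_ball_zero_iff.mpr h
  have hSd : DiffContOnCl ℂ S (ball (0:ℂ) r) := by
    refine DifferentiableOn.diffContOnCl (hS.mono hsub)
  -- conjugation identity
  have hne : ∀ (ζ w : ℂ), ‖ζ‖ < r → ‖w‖ ≤ r → (r:ℂ)^2 - w * conj ζ ≠ 0 := by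
    intro ζ w hζ hw
    have h1 : ‖w * conj ζ‖ < ‖((r:ℂ))^2‖ := by
      rw [norm_mul, norm_pow, Complex.norm_real, Real.norm_eq_abs, abs_of_pos hr0,
        RCLike.norm_conj]
      calc ‖w‖ * ‖ζ‖ ≤ r * ‖ζ‖ := mul_le_mul_of_nonneg_right hw (norm_nonneg _)
        _ < r * r := mul_lt_mul_of_pos_left hζ hr0
        _ = r^2 := (sq r).symm
    exact sub_ne_zero.mpr (fun h => absurd h1 (by rw [← h]; exact lt_irrefl _))
  have conjP : ∀ (ζ : ℂ), ‖ζ‖ < r → ∀ θ,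
      conj (m θ / (m θ - ζ)) = (r:ℂ)^2 / ((r:ℂ)^2 - m θ * conj ζ) := by
    intro ζ hζ θ
    have hwc : m θ * conj (m θ) = (r:ℂ)^2 := by
      rw [Complex.mul_conj]
      rw [Complex.normSq_eq_norm_sq, hmnorm θ]
      push_cast
      ring
    have hd0 : m θ - ζ ≠ 0 :=
      sub_ne_zero.mpr (fun h => absurd (hmnorm θ) (by rw [h]; exact (hζ).ne))
    have hd1 : conj (m θ) - conj ζ ≠ 0 := by
      rw [← map_sub]
      exact fun h => hd0 (by simpa using congrArg (starRingEnd ℂ) h)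
    have hd2 : (r:ℂ)^2 - m θ * conj ζ ≠ 0 := hne ζ (m θ) hζ (hmnorm θ).le
    rw [map_div₀, map_sub]
    rw [div_eq_div_iff hd1 hd2]
    linear_combination (-(conj ζ)) * hwc
  -- the functions V and W
  set Vf : ℝ → ℂ := fun θ => ∑ i, conj (c i) * (m θ / (m θ - z i)) with hVf
  set Wf : ℝ → ℂ := fun θ => ∑ i, (conj (c i) * S (z i)) * (m θ / (m θ - z i)) with hWf
  have hVconj : ∀ θ, conj (Vf θ) = ∑ j, c j * ((r:ℂ)^2 / ((r:ℂ)^2 - m θ * conj (z j))) := by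
    intro θ
    rw [hVf, map_sum]
    exact Finset.sum_congr rfl fun j _ => by
      rw [map_mul, Complex.conj_conj, conjP (z j) (hz j) θ]
  have hWconj : ∀ θ, conj (Wf θ)
      = ∑ j, (c j * conj (S (z j))) * ((r:ℂ)^2 / ((r:ℂ)^2 - m θ * conj (z j))) := by
    intro θ
    rw [hWf, map_sum]
    exact Finset.sum_congr rfl fun j _ => by
      rw [map_mul, map_mul, Complex.conj_conj, conjP (z j) (hz j) θ]
  -- the three integral identities
  set K : Fin n → Fin n → ℂ := fun i j => (r:ℂ)^2 / ((r:ℂ)^2 - z i * conj (z j)) with hK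
  set A : ℂ := ∑ i, ∑ j, conj (c i) * c j * ((1:ℂ) * K i j) with hA
  set B : ℂ := ∑ i, ∑ j, (conj (c i) * S (z i)) * (c j * conj (S (z j))) * ((1:ℂ) * K i j)
    with hB
  have EA : (∫ θ in (0:ℝ)..(2*Real.pi), conj (Vf θ) * Vf θ) = ((2*Real.pi : ℝ) : ℂ) * A := by
    have := dbr_bilin hr0 hz (Φ := fun _ => (1:ℂ)) diffContOnCl_const c (fun i => conj (c i))
    rw [← this]
    exact intervalIntegral.integral_congr fun θ _ => by
      rw [hVconj θ]; rw [hVf]; ring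
  have EB : (∫ θ in (0:ℝ)..(2*Real.pi), conj (Wf θ) * Wf θ) = ((2*Real.pi : ℝ) : ℂ) * B := by
    have := dbr_bilin hr0 hz (Φ := fun _ => (1:ℂ)) diffContOnCl_const
      (fun j => c j * conj (S (z j))) (fun i => conj (c i) * S (z i))
    rw [← this]
    exact intervalIntegral.integral_congr fun θ _ => by
      rw [hWconj θ]; rw [hWf]; ring
  have EC : (∫ θ in (0:ℝ)..(2*Real.pi), S (m θ) * conj (Wf θ) * Vf θ)
      = ((2*Real.pi : ℝ) : ℂ) * B := by
    have h := dbr_bilin hr0 hz (Φ := S) hSd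
      (fun j => c j * conj (S (z j))) (fun i => conj (c i))
    have hBalt : B = ∑ i, ∑ j, conj (c i) * (c j * conj (S (z j)))
        * (S (z i) * ((r:ℂ)^2 / ((r:ℂ)^2 - z i * conj (z j)))) := by
      rw [hB]
      exact Finset.sum_congr rfl fun i _ => Finset.sum_congr rfl fun j _ => by rw [hK]; ring
    rw [hBalt, ← h]
    refine intervalIntegral.integral_congr fun θ _ => ?_
    rw [hWconj θ]
  -- continuity facts
  have hcm : Continuous m := continuous_circleMap 0 r
  have hcP : ∀ i : Fin n, Continuous fun θ => m θ / (m θ - z i) := by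
    intro i
    refine hcm.div (hcm.sub continuous_const) (fun θ => sub_ne_zero.mpr ?_)
    exact fun h => absurd (hmnorm θ) (by rw [h]; exact (hz i).ne)
  have hcV : Continuous Vf := continuous_finset_sum _ (fun i _ => continuous_const.mul (hcP i))
  have hcW : Continuous Wf := continuous_finset_sum _ (fun i _ => continuous_const.mul (hcP i))
  have hcS : Continuous fun θ => S (m θ) := by
    refine (hS.continuousOn).comp_continuous hcm (fun θ => hmball θ)
  -- real-valued integrals
  set IA : ℝ := ∫ θ in (0:ℝ)..(2*Real.pi), ‖Vf θ‖^2 with hIA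
  set IB : ℝ := ∫ θ in (0:ℝ)..(2*Real.pi), ‖Wf θ‖^2 with hIB
  have hpt : ∀ w : ℂ, conj w * w = ((‖w‖^2 : ℝ) : ℂ) := by
    intro w
    rw [mul_comm, Complex.mul_conj, Complex.normSq_eq_norm_sq]
  have hIAc : ((IA : ℝ) : ℂ) = ((2*Real.pi : ℝ) : ℂ) * A := by
    calc ((IA : ℝ) : ℂ) = ∫ θ in (0:ℝ)..(2*Real.pi), ((‖Vf θ‖^2 : ℝ) : ℂ) :=
          (intervalIntegral.integral_ofReal).symm
      _ = ∫ θ in (0:ℝ)..(2*Real.pi), conj (Vf θ) * Vf θ :=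
          intervalIntegral.integral_congr fun θ _ => (hpt (Vf θ)).symm
      _ = ((2*Real.pi : ℝ) : ℂ) * A := EA
  have hIBc : ((IB : ℝ) : ℂ) = ((2*Real.pi : ℝ) : ℂ) * B := by
    calc ((IB : ℝ) : ℂ) = ∫ θ in (0:ℝ)..(2*Real.pi), ((‖Wf θ‖^2 : ℝ) : ℂ) :=
          (intervalIntegral.integral_ofReal).symm
      _ = ∫ θ in (0:ℝ)..(2*Real.pi), conj (Wf θ) * Wf θ :=
          intervalIntegral.integral_congr fun θ _ => (hpt (Wf θ)).symm
      _ = ((2*Real.pi : ℝ) : ℂ) * B := EB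
  have hIAre : IA = 2*Real.pi * A.re := by
    have := congrArg Complex.re hIAc
    simpa [Complex.ofReal_re, Complex.re_ofReal_mul] using this
  have hIBre : IB = 2*Real.pi * B.re := by
    have := congrArg Complex.re hIBc
    simpa [Complex.ofReal_re, Complex.re_ofReal_mul] using this
  -- integrability
  have int1 : IntervalIntegrable (fun θ => ‖S (m θ) * conj (Wf θ) * Vf θ‖)
      MeasureTheory.volume 0 (2*Real.pi) :=
    (((hcS.mul hcW.star).mul hcV).norm).intervalIntegrable _ _
  have intW : IntervalIntegrable (fun θ => ‖Wf θ‖^2) MeasureTheory.volume 0 (2*Real.pi) :=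
    ((hcW.norm.pow 2)).intervalIntegrable _ _
  have intV : IntervalIntegrable (fun θ => ‖Vf θ‖^2) MeasureTheory.volume 0 (2*Real.pi) :=
    ((hcV.norm.pow 2)).intervalIntegrable _ _
  have int2 : IntervalIntegrable (fun θ => (‖Wf θ‖^2 + ‖Vf θ‖^2)/2)
      MeasureTheory.volume 0 (2*Real.pi) :=
    (((hcW.norm.pow 2).add (hcV.norm.pow 2)).div_const 2).intervalIntegrable _ _
  have h2pi : (0:ℝ) ≤ 2*Real.pi := by positivity
  -- pointwise bound and monotonicity
  have hmono : (∫ θ in (0:ℝ)..(2*Real.pi), ‖S (m θ) * conj (Wf θ) * Vf θ‖)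
      ≤ ∫ θ in (0:ℝ)..(2*Real.pi), (‖Wf θ‖^2 + ‖Vf θ‖^2)/2 := by
    refine intervalIntegral.integral_mono_on h2pi int1 int2 (fun θ _ => ?_)
    have hSn : ‖S (m θ)‖ ≤ 1 := hSb _ (hmball θ)
    have h1 : ‖S (m θ) * conj (Wf θ) * Vf θ‖ = ‖S (m θ)‖ * ‖Wf θ‖ * ‖Vf θ‖ := by
      rw [norm_mul, norm_mul, RCLike.norm_conj]
    rw [h1]
    have h2 : 2 * ‖Wf θ‖ * ‖Vf θ‖ ≤ ‖Wf θ‖^2 + ‖Vf θ‖^2 := two_mul_le_add_sq _ _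
    nlinarith [norm_nonneg (S (m θ)), norm_nonneg (Wf θ), norm_nonneg (Vf θ),
      mul_nonneg (norm_nonneg (Wf θ)) (norm_nonneg (Vf θ))]
  -- the chain of inequalities
  have hBle : IB ≤ (IB + IA)/2 := by
    have e1 : IB = (((2*Real.pi : ℝ) : ℂ) * B).re := by
      rw [← hIBc, Complex.ofReal_re]
    have e2 : (((2*Real.pi : ℝ) : ℂ) * B).re
        = (∫ θ in (0:ℝ)..(2*Real.pi), S (m θ) * conj (Wf θ) * Vf θ).re := by rw [EC]
    have e3 : (∫ θ in (0:ℝ)..(2*Real.pi), S (m θ) * conj (Wf θ) * Vf θ).re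
        ≤ ‖∫ θ in (0:ℝ)..(2*Real.pi), S (m θ) * conj (Wf θ) * Vf θ‖ := by
      exact Complex.re_le_norm _
    have e4 : ‖∫ θ in (0:ℝ)..(2*Real.pi), S (m θ) * conj (Wf θ) * Vf θ‖
        ≤ ∫ θ in (0:ℝ)..(2*Real.pi), ‖S (m θ) * conj (Wf θ) * Vf θ‖ :=
      intervalIntegral.norm_integral_le_integral_norm h2pi
    have e5 : (∫ θ in (0:ℝ)..(2*Real.pi), (‖Wf θ‖^2 + ‖Vf θ‖^2)/2) = (IB + IA)/2 := by
      rw [intervalIntegral.integral_div, intervalIntegral.integral_add intW intV]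
    calc IB = (((2*Real.pi : ℝ) : ℂ) * B).re := e1
      _ = (∫ θ in (0:ℝ)..(2*Real.pi), S (m θ) * conj (Wf θ) * Vf θ).re := e2
      _ ≤ ∫ θ in (0:ℝ)..(2*Real.pi), ‖S (m θ) * conj (Wf θ) * Vf θ‖ := le_trans e3 e4
      _ ≤ ∫ θ in (0:ℝ)..(2*Real.pi), (‖Wf θ‖^2 + ‖Vf θ‖^2)/2 := hmono
      _ = (IB + IA)/2 := e5
  have hBA : B.re ≤ A.re := by
    have hIBA : IB ≤ IA := by linarith
    rw [hIAre, hIBre] at hIBA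
    have hπ : (0:ℝ) < 2*Real.pi := by positivity
    exact le_of_mul_le_mul_left hIBA hπ
  -- final rearrangement
  have hsum : (∑ i, ∑ j, (1 - S (z i) * conj (S (z j))) * c j * conj (c i)
      * ((r:ℂ)^2 / ((r:ℂ)^2 - z i * conj (z j)))) = A - B := by
    rw [hA, hB, ← Finset.sum_sub_distrib]
    refine Finset.sum_congr rfl fun i _ => ?_
    rw [← Finset.sum_sub_distrib]
    refine Finset.sum_congr rfl fun j _ => ?_
    rw [hK]
    ring
  rw [hsum, Complex.sub_re]
  linarith


set_option maxHeartbeats 1000000 in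
/-- The de Branges–Rovnyak kernel `K_S(z,ζ) = (1 - S(z) conj(S(ζ)))/(1 - z conj(ζ))` of a
scalar Schur-class function `S` is a positive kernel on the unit disk. -/
theorem deBrangesRovnyak_kernel_positive
    (S : ℂ → ℂ)
    (hS : DifferentiableOn ℂ S (Metric.ball (0 : ℂ) 1))
    (hSb : ∀ z ∈ Metric.ball (0 : ℂ) 1, ‖S z‖ ≤ 1) :
    ∀ (n : ℕ) (z : Fin n → ℂ), (∀ i, z i ∈ Metric.ball (0 : ℂ) 1) →
      ∀ c : Fin n → ℂ,
        0 ≤ (∑ i : Fin n, ∑ j : Fin n,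
          (1 - S (z i) * conj (S (z j))) / (1 - z i * conj (z j)) * c j * conj (c i)).re := by
  intro n z hz c
  have hzn : ∀ i, ‖z i‖ < 1 := fun i => mem_ball_zero_iff.mp (hz i)
  set u : NNReal := Finset.univ.sup (fun i => ‖z i‖₊) with hu
  have hu1 : (u:ℝ) < 1 := by
    have : u < 1 := by
      rw [hu, Finset.sup_lt_iff (by norm_num : (⊥ : NNReal) < 1)]
      intro i _
      have := hzn i
      rw [← coe_nnnorm] at this
      exact_mod_cast this
    exact_mod_cast this
  have hui : ∀ i, ‖z i‖ ≤ (u:ℝ) := by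
    intro i
    have : ‖z i‖₊ ≤ u := Finset.le_sup (f := fun i => ‖z i‖₊) (Finset.mem_univ i)
    rw [← coe_nnnorm]
    exact_mod_cast this
  set r₀ : ℝ := max (1/2) (u:ℝ) with hr₀
  have hr₀1 : r₀ < 1 := max_lt (by norm_num) hu1
  set Q : ℝ → ℝ := fun r => (∑ i : Fin n, ∑ j : Fin n,
      (1 - S (z i) * conj (S (z j))) * c j * conj (c i)
        * ((r:ℂ)^2 / ((r:ℂ)^2 - z i * conj (z j)))).re with hQ
  have hne1 : ∀ i j : Fin n, ((1:ℝ):ℂ)^2 - z i * conj (z j) ≠ 0 := by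
    intro i j
    have h1 : ‖z i * conj (z j)‖ < ‖((1:ℝ):ℂ)^2‖ := by
      rw [norm_mul, RCLike.norm_conj]
      simp only [Complex.ofReal_one, one_pow, norm_one]
      calc ‖z i‖ * ‖z j‖ ≤ 1 * ‖z j‖ :=
            mul_le_mul_of_nonneg_right (hzn i).le (norm_nonneg _)
        _ = ‖z j‖ := one_mul _
        _ < 1 := hzn j
    exact sub_ne_zero.mpr (fun h => absurd h1 (by rw [← h]; exact lt_irrefl _))
  have hev : ∀ᶠ r in nhdsWithin (1:ℝ) (Set.Iio 1), 0 ≤ Q r := by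
    filter_upwards [Ioo_mem_nhdsLT_of_mem (Set.mem_Ioc.mpr ⟨hr₀1, le_refl (1:ℝ)⟩)]
    intro r hr
    have hr0 : 0 < r := lt_of_lt_of_le (by norm_num) ((le_max_left _ _).trans hr.1.le)
    have hzr : ∀ i, ‖z i‖ < r := fun i =>
      lt_of_le_of_lt ((hui i).trans (le_max_right (1/2) (u:ℝ))) hr.1
    exact dbr_key S hS hSb hr0 hr.2 hzr c
  have htend : Filter.Tendsto Q (nhdsWithin (1:ℝ) (Set.Iio 1)) (nhds (Q 1)) := by
    have hterm : ∀ i j : Fin n, Filter.Tendsto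
        (fun r : ℝ => (1 - S (z i) * conj (S (z j))) * c j * conj (c i)
          * ((r:ℂ)^2 / ((r:ℂ)^2 - z i * conj (z j)))) (nhds 1)
        (nhds ((1 - S (z i) * conj (S (z j))) * c j * conj (c i)
          * (((1:ℝ):ℂ)^2 / (((1:ℝ):ℂ)^2 - z i * conj (z j))))) := by
      intro i j
      apply Filter.Tendsto.mul tendsto_const_nhds
      apply Filter.Tendsto.div
      · exact ((Complex.continuous_ofReal.tendsto 1).pow 2)
      · exact ((Complex.continuous_ofReal.tendsto 1).pow 2).sub tendsto_const_nhds
      · exact hne1 i j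
    have hsum : Filter.Tendsto (fun r : ℝ => ∑ i : Fin n, ∑ j : Fin n,
        (1 - S (z i) * conj (S (z j))) * c j * conj (c i)
          * ((r:ℂ)^2 / ((r:ℂ)^2 - z i * conj (z j)))) (nhds 1)
        (nhds (∑ i : Fin n, ∑ j : Fin n,
          (1 - S (z i) * conj (S (z j))) * c j * conj (c i)
            * (((1:ℝ):ℂ)^2 / (((1:ℝ):ℂ)^2 - z i * conj (z j))))) := by
      refine tendsto_finset_sum _ (fun i _ => tendsto_finset_sum _ (fun j _ => hterm i j))
    have := (Complex.continuous_re.tendsto _).comp hsum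
    exact this.mono_left nhdsWithin_le_nhds
  have h01 : 0 ≤ Q 1 := ge_of_tendsto htend hev
  have hQ1 : Q 1 = (∑ i : Fin n, ∑ j : Fin n,
      (1 - S (z i) * conj (S (z j))) / (1 - z i * conj (z j)) * c j * conj (c i)).re := by
    simp only [hQ]
    congr 1
    refine Finset.sum_congr rfl fun i _ => Finset.sum_congr rfl fun j _ => ?_
    simp only [Complex.ofReal_one, one_pow]
    ring
  rw [← hQ1]
  exact h01
end

section
/- Let K be a Kreĭn space given by a Hilbert space H with fundamental symmetry W (a bounded, boundedly invertible self-adjoint operator defining the indefinite inner product [x, y] = ⟨W x, y⟩). Let G ⊆ K be a closed subspace that is uniformly positive, i.e., [g, g] ≥ c ‖g‖² for all g ∈ G with some c > 0. Then K decomposes as the [·,·]-orthogonal direct sum G ⊕ G^{[⊥]}, where G^{[⊥]} = { k : [k, g] = 0 for all g ∈ G }. -/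
open scoped InnerProductSpace

/-- In a Kreĭn space (Hilbert space `H` with fundamental symmetry `W`), a closed uniformly
positive subspace `G` yields the `[·,·]`-orthogonal direct-sum decomposition
`H = G ⊕ G^[⊥]`: every vector decomposes uniquely as `g + h` with `g ∈ G` and `h`
`W`-orthogonal to `G`. -/
theorem krein_uniformly_positive_decomposition
    {H : Type*} [NormedAddCommGroup H] [InnerProductSpace ℂ H] [CompleteSpace H]
    (W : H →L[ℂ] H) (hWsa : IsSelfAdjoint W) (hWinv : IsUnit W)
    (G : Submodule ℂ H) (hGclosed : IsClosed (G : Set H))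
    (hGpos : ∃ c : ℝ, 0 < c ∧ ∀ g ∈ G, c * ‖g‖ ^ 2 ≤ (⟪W g, g⟫_ℂ).re) :
    ∀ x : H, ∃! p : H × H,
      p.1 ∈ G ∧ (∀ g ∈ G, ⟪W p.2, g⟫_ℂ = 0) ∧ x = p.1 + p.2 := by
  obtain ⟨c, hc, hcoer⟩ := hGpos
  haveI : CompleteSpace G := hGclosed.completeSpace_coe
  -- The compression of W to G
  set T : G →L[ℂ] G := (G.orthogonalProjection) ∘L (W ∘L G.subtypeL) with hTdef
  have hTinner : ∀ u v : G, ⟪T u, v⟫_ℂ = ⟪W (u : H), (v : H)⟫_ℂ := by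
    intro u v
    show (⟪G.orthogonalProjection (W (u : H)), v⟫_ℂ) = _
    exact Submodule.inner_orthogonalProjection_eq_of_mem_right (K := G) v (W (u : H))
  -- coercivity of T
  have hTcoer : ∀ u : G, c * ‖u‖ ^ 2 ≤ (⟪T u, u⟫_ℂ).re := by
    intro u
    rw [hTinner]
    simpa using hcoer (u : H) u.2
  -- antilipschitz bound
  have hbound : ∀ u : G, ‖u‖ ≤ c⁻¹ * ‖T u‖ := by
    intro u
    have h1 : (⟪T u, u⟫_ℂ).re ≤ ‖T u‖ * ‖u‖ := re_inner_le_norm (𝕜 := ℂ) _ _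
    have h2 := hTcoer u
    rcases eq_or_lt_of_le (norm_nonneg u) with h0 | h0
    · rw [← h0]; positivity
    · have h3 : c * ‖u‖ ≤ ‖T u‖ := by nlinarith
      have h4 := mul_le_mul_of_nonneg_left h3 (le_of_lt (inv_pos.mpr hc))
      rwa [← mul_assoc, inv_mul_cancel₀ hc.ne', one_mul] at h4
  have hanti : AntilipschitzWith ⟨c⁻¹, by positivity⟩ T :=
    T.antilipschitz_of_bound (by exact_mod_cast hbound)
  have hTinj : Function.Injective T := hanti.injective
  -- range of T is closed
  have hclosed : IsClosed ((LinearMap.range (T : G →ₗ[ℂ] G) : Submodule ℂ G) : Set G) := by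
    have h := ContinuousLinearMap.closed_range_of_antilipschitz hanti
    exact h ▸ Submodule.isClosed_topologicalClosure _
  haveI : CompleteSpace (LinearMap.range (T : G →ₗ[ℂ] G)) := hclosed.completeSpace_coe
  -- range of T is all of G
  have hTsurj : Function.Surjective T := by
    have hbot : (LinearMap.range (T : G →ₗ[ℂ] G))ᗮ = ⊥ := by
      rw [Submodule.eq_bot_iff]
      intro v hv
      have h0 : ⟪T v, v⟫_ℂ = 0 := hv (T v) (LinearMap.mem_range_self _ v)
      have h2 := hTcoer v
      rw [h0] at h2
      simp only [Complex.zero_re] at h2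
      have hsq : ‖v‖ ^ 2 = 0 := le_antisymm (by nlinarith) (sq_nonneg _)
      have : ‖v‖ = 0 := pow_eq_zero_iff two_ne_zero |>.mp hsq
      simpa using this
    have htop : LinearMap.range (T : G →ₗ[ℂ] G) = ⊤ := Submodule.orthogonal_eq_bot_iff.mp hbot
    intro y
    have : y ∈ LinearMap.range (T : G →ₗ[ℂ] G) := htop ▸ Submodule.mem_top
    exact this
  intro x
  obtain ⟨g, hg⟩ := hTsurj (G.orthogonalProjection (W x))
  -- key: ⟪W g, v⟫ = ⟪W x, v⟫ for v ∈ G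
  have hkey : ∀ v : G, ⟪W (g : H), (v : H)⟫_ℂ = ⟪W x, (v : H)⟫_ℂ := by
    intro v
    rw [← hTinner, hg]
    exact Submodule.inner_orthogonalProjection_eq_of_mem_right (K := G) v (W x)
  refine ⟨((g : H), x - g), ⟨g.2, ?_, by simp⟩, ?_⟩
  · intro v hv
    rw [map_sub, inner_sub_left, hkey ⟨v, hv⟩, sub_self]
  · rintro ⟨g₂, h₂⟩ ⟨hg₂, horth, hx⟩
    -- g₂ ∈ G solves the same equation
    have hkey₂ : ∀ v : G, ⟪W g₂, (v : H)⟫_ℂ = ⟪W x, (v : H)⟫_ℂ := by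
      intro v
      have : ⟪W h₂, (v : H)⟫_ℂ = 0 := horth v v.2
      rw [hx, map_add, inner_add_left, this, add_zero]
    have hTeq : T ⟨g₂, hg₂⟩ = T g := by
      apply ext_inner_right ℂ
      intro v
      rw [hTinner, hTinner, hkey₂ v, hkey v]
    have hge : (⟨g₂, hg₂⟩ : G) = g := hTinj hTeq
    have hg₂e : g₂ = (g : H) := congrArg Subtype.val hge
    have hh₂e : h₂ = x - (g : H) := by
      rw [← hg₂e, hx]; abel
    exact Prod.ext hg₂e hh₂e
end

section
/- Let A : H → H be a bounded operator on a Hilbert space, B : U → H, C : H → Y, D : U → Y bounded, and suppose the colligation matrix [[A, B], [C, D]] : H ⊕ U → H ⊕ Y is a coisometry (U U* = I). Then for the transfer function S(z) = D + z C (I − z A)^{-1} B (defined for |z| < 1/‖A‖ or for z in the unit disk when ‖A‖ ≤ 1), the identity (I_Y − S(z) S(ζ)*)/(1 − z conj(ζ)) = C (I − z A)^{-1} (I − conj(ζ) A*)^{-1} C* holds for all z, ζ in the domain. -/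
open ContinuousLinearMap

private lemma aux_ring {R : Type*} [Ring R] [Algebra ℂ R] (A d : R) (z zb : ℂ)
    (he : IsUnit ((1:R) - z • A)) (hf : IsUnit ((1:R) - zb • d)) :
    (1:R) + z • (Ring.inverse ((1:R) - z • A) * A)
      + zb • (d * Ring.inverse ((1:R) - zb • d))
      - (z * zb) • (Ring.inverse ((1:R) - z • A) * ((1:R) - A * d) * Ring.inverse ((1:R) - zb • d))
    = (1 - z * zb) • (Ring.inverse ((1:R) - z • A) * Ring.inverse ((1:R) - zb • d)) := by
  set e := (1:R) - z • A with hedef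
  set f := (1:R) - zb • d with hfdef
  set ei := Ring.inverse e with heidef
  set fi := Ring.inverse f with hfidef
  have h1 : ei * e = 1 := Ring.inverse_mul_cancel e he
  have h4 : f * fi = 1 := Ring.mul_inverse_cancel f hf
  have key1 : (1 - z * zb) • (1 : R) =
      e * f + z • (A * f) + zb • (e * d) - (z * zb) • ((1:R) - A * d) := by
    rw [hedef, hfdef]
    simp only [mul_sub, sub_mul, mul_one, one_mul, smul_sub, smul_smul, smul_mul_assoc,
      mul_smul_comm, sub_smul, one_smul]
    module
  have T1 : ei * (e * f) * fi = 1 := by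
    rw [← mul_assoc, h1, one_mul, h4]
  have T2 : ei * (A * f) * fi = ei * A := by
    rw [← mul_assoc, mul_assoc, h4, mul_one]
  have T3 : ei * (e * d) * fi = d * fi := by
    rw [← mul_assoc, h1, one_mul]
  have main : ei * ((1 - z * zb) • (1:R)) * fi
      = ei * (e * f + z • (A * f) + zb • (e * d) - (z * zb) • ((1:R) - A * d)) * fi := by
    rw [← key1]
  rw [mul_smul_comm, smul_mul_assoc, mul_one] at main
  rw [main]
  simp only [mul_add, add_mul, mul_sub, sub_mul, mul_smul_comm, smul_mul_assoc, mul_one, one_mul]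
  rw [T1, T2, T3]

private lemma aux_adjoint_inverse {H : Type*}
    [NormedAddCommGroup H] [InnerProductSpace ℂ H] [CompleteSpace H]
    (e : H →L[ℂ] H) (he : IsUnit e) (hfe : IsUnit (ContinuousLinearMap.adjoint e)) :
    ContinuousLinearMap.adjoint (Ring.inverse e)
      = Ring.inverse (ContinuousLinearMap.adjoint e) := by
  have adj_mul : ∀ a b : H →L[ℂ] H, ContinuousLinearMap.adjoint (a * b)
      = ContinuousLinearMap.adjoint b * ContinuousLinearMap.adjoint a := by
    intro a b
    rw [← star_eq_adjoint, star_mul, star_eq_adjoint, star_eq_adjoint]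
  have adj_one : ContinuousLinearMap.adjoint (1 : H →L[ℂ] H) = 1 := by
    rw [← star_eq_adjoint, star_one]
  have a1 : ContinuousLinearMap.adjoint e * ContinuousLinearMap.adjoint (Ring.inverse e) = 1 := by
    rw [← adj_mul, Ring.inverse_mul_cancel e he, adj_one]
  calc ContinuousLinearMap.adjoint (Ring.inverse e)
      = 1 * ContinuousLinearMap.adjoint (Ring.inverse e) := (one_mul _).symm
    _ = (Ring.inverse (ContinuousLinearMap.adjoint e) * ContinuousLinearMap.adjoint e)
          * ContinuousLinearMap.adjoint (Ring.inverse e) := by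
        rw [Ring.inverse_mul_cancel _ hfe]
    _ = Ring.inverse (ContinuousLinearMap.adjoint e)
          * (ContinuousLinearMap.adjoint e * ContinuousLinearMap.adjoint (Ring.inverse e)) :=
        mul_assoc _ _ _
    _ = Ring.inverse (ContinuousLinearMap.adjoint e) := by rw [a1, mul_one]

set_option maxHeartbeats 1000000 in
/-- For a coisometric colligation `[[A,B],[C,D]] : H ⊕ U → H ⊕ Y` with `‖A‖ ≤ 1`, the
transfer function `S(z) = D + z C (I - zA)⁻¹ B` satisfies the de Branges–Rovnyak kernel
identity `I - S(z) S(ζ)* = (1 - z ζ̄) C (I - zA)⁻¹ (I - ζ̄ A*)⁻¹ C*` on the unit disk. -/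
theorem coisometric_colligation_kernel_identity
    {H U Y : Type*}
    [NormedAddCommGroup H] [InnerProductSpace ℂ H] [CompleteSpace H]
    [NormedAddCommGroup U] [InnerProductSpace ℂ U] [CompleteSpace U]
    [NormedAddCommGroup Y] [InnerProductSpace ℂ Y] [CompleteSpace Y]
    (A : H →L[ℂ] H) (B : U →L[ℂ] H) (C : H →L[ℂ] Y) (D : U →L[ℂ] Y)
    (hA : ‖A‖ ≤ 1)
    (hco₁ : A ∘L ContinuousLinearMap.adjoint A + B ∘L ContinuousLinearMap.adjoint B = 1)
    (hco₂ : A ∘L ContinuousLinearMap.adjoint C + B ∘L ContinuousLinearMap.adjoint D = 0)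
    (hco₃ : C ∘L ContinuousLinearMap.adjoint C + D ∘L ContinuousLinearMap.adjoint D = 1)
    (S : ℂ → (U →L[ℂ] Y))
    (hS : ∀ z : ℂ, S z = D + z • (C ∘L Ring.inverse ((1 : H →L[ℂ] H) - z • A) ∘L B)) :
    ∀ z ζ : ℂ, ‖z‖ < 1 → ‖ζ‖ < 1 →
      1 - S z ∘L ContinuousLinearMap.adjoint (S ζ) =
        (1 - z * (starRingEnd ℂ) ζ) •
          (C ∘L Ring.inverse ((1 : H →L[ℂ] H) - z • A)
            ∘L Ring.inverse ((1 : H →L[ℂ] H)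
                  - ((starRingEnd ℂ) ζ) • ContinuousLinearMap.adjoint A)
            ∘L ContinuousLinearMap.adjoint C) := by
  intro z ζ hz hζ
  set zb := (starRingEnd ℂ) ζ with hzbdef
  have hzb : ‖zb‖ < 1 := by rwa [hzbdef, RCLike.norm_conj]
  have hAd : ‖ContinuousLinearMap.adjoint A‖ ≤ 1 := by
    rw [show ‖ContinuousLinearMap.adjoint A‖ = ‖A‖ from adjoint.norm_map A]; exact hA
  have unital : ∀ (w : ℂ) (T : H →L[ℂ] H), ‖w‖ < 1 → ‖T‖ ≤ 1 →
      IsUnit ((1 : H →L[ℂ] H) - w • T) := by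
    intro w T hw hT
    have : ‖w • T‖ < 1 := by
      rw [norm_smul]
      calc ‖w‖ * ‖T‖ ≤ ‖w‖ * 1 := mul_le_mul_of_nonneg_left hT (norm_nonneg w)
      _ = ‖w‖ := mul_one _
      _ < 1 := hw
    exact ⟨Units.oneSub (w • T) this, rfl⟩
  have he : IsUnit ((1 : H →L[ℂ] H) - z • A) := unital z A hz hA
  have heζ : IsUnit ((1 : H →L[ℂ] H) - ζ • A) := unital ζ A hζ hA
  have hf : IsUnit ((1 : H →L[ℂ] H) - zb • ContinuousLinearMap.adjoint A) :=
    unital zb _ hzb hAd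
  set ei := Ring.inverse ((1 : H →L[ℂ] H) - z • A) with heidef
  set fi := Ring.inverse ((1 : H →L[ℂ] H) - zb • ContinuousLinearMap.adjoint A) with hfidef
  set Ad := ContinuousLinearMap.adjoint A with hAddef
  -- adjoint of (1 - ζ•A)
  have hadj_e : ContinuousLinearMap.adjoint ((1 : H →L[ℂ] H) - ζ • A)
      = (1 : H →L[ℂ] H) - zb • Ad := by
    rw [map_sub, LinearIsometryEquiv.map_smulₛₗ, ← star_eq_adjoint (1 : H →L[ℂ] H), star_one]
  have hadj_inv : ContinuousLinearMap.adjoint (Ring.inverse ((1 : H →L[ℂ] H) - ζ • A)) = fi := by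
    rw [aux_adjoint_inverse _ heζ (hadj_e ▸ hf), hadj_e]
  -- adjoint of S ζ
  have hSadj : ContinuousLinearMap.adjoint (S ζ)
      = ContinuousLinearMap.adjoint D
        + zb • (ContinuousLinearMap.adjoint B ∘L (fi ∘L ContinuousLinearMap.adjoint C)) := by
    rw [hS ζ, map_add, LinearIsometryEquiv.map_smulₛₗ, adjoint_comp, adjoint_comp, hadj_inv]
    rfl
  -- colligation consequences
  have hco₂' : C ∘L Ad + D ∘L ContinuousLinearMap.adjoint B = 0 := by
    have h := congrArg (ContinuousLinearMap.adjoint) hco₂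
    simpa [map_add, adjoint_comp, adjoint_adjoint] using h
  have hBB : B ∘L ContinuousLinearMap.adjoint B = 1 - A ∘L Ad := eq_sub_of_add_eq' hco₁
  have hBD : B ∘L ContinuousLinearMap.adjoint D = -(A ∘L ContinuousLinearMap.adjoint C) :=
    eq_neg_of_add_eq_zero_right hco₂
  have hDB : D ∘L ContinuousLinearMap.adjoint B = -(C ∘L Ad) :=
    eq_neg_of_add_eq_zero_right hco₂'
  have hDD : D ∘L ContinuousLinearMap.adjoint D = 1 - C ∘L ContinuousLinearMap.adjoint C :=
    eq_sub_of_add_eq' hco₃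
  -- the four product terms
  have hDQ : D ∘L (ContinuousLinearMap.adjoint B ∘L (fi ∘L ContinuousLinearMap.adjoint C))
      = -(C ∘L (Ad ∘L (fi ∘L ContinuousLinearMap.adjoint C))) := by
    rw [← comp_assoc, hDB, neg_comp, comp_assoc]
  -- right-hand side reshaping
  have hRHS : (1 - z * zb) • (C ∘L ei ∘L fi ∘L ContinuousLinearMap.adjoint C)
      = C ∘L ContinuousLinearMap.adjoint C
        + z • (C ∘L ((ei * A) ∘L ContinuousLinearMap.adjoint C))
        + zb • (C ∘L ((Ad * fi) ∘L ContinuousLinearMap.adjoint C))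
        - (z * zb) • (C ∘L ((ei * ((1 : H →L[ℂ] H) - A * Ad) * fi)
            ∘L ContinuousLinearMap.adjoint C)) := by
    have h0 := aux_ring A Ad z zb he hf
    calc (1 - z * zb) • (C ∘L ei ∘L fi ∘L ContinuousLinearMap.adjoint C)
        = C ∘L (((1 - z * zb) • (ei * fi)) ∘L ContinuousLinearMap.adjoint C) := by
          simp only [mul_def, comp_assoc, smul_comp, comp_smul]
      _ = C ∘L (((1 : H →L[ℂ] H) + z • (ei * A) + zb • (Ad * fi)
            - (z * zb) • (ei * ((1 : H →L[ℂ] H) - A * Ad) * fi))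
              ∘L ContinuousLinearMap.adjoint C) := by rw [h0]
      _ = _ := by
          simp only [add_comp, sub_comp, comp_add, comp_sub, smul_comp, comp_smul,
            one_def, id_comp]
  -- main computation
  rw [hS z, hSadj, hRHS]
  simp only [add_comp, comp_add, comp_smul, smul_comp, smul_smul, comp_assoc]
  rw [hDQ, hBD, ← comp_assoc B (ContinuousLinearMap.adjoint B), hBB, hDD]
  simp only [mul_def, comp_assoc, neg_comp, comp_neg, smul_neg, sub_comp, comp_sub,
    one_def, id_comp, comp_id, comp_smul, smul_comp, smul_smul, smul_sub, smul_add]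
  module
end

section
/- Let f be a function holomorphic on a punctured disk-neighborhood region U_{t₀,ε} = { z ∈ 𝔻 : 0 < |z − t₀| < ε } where t₀ is a point of the unit circle, with values in a Banach space. Suppose for some n ≥ 1 and every angle α ∈ (0, π/2) there is γ_α < ∞ with ‖f^{(n)}(z)‖ ≤ γ_α for all z ∈ U_{t₀,ε} satisfying |arg(z − t₀) − arg(−t₀)| < α (nontangential approach region). Then the nontangential limits of f^{(j)}(z) as z → t₀ exist for every j = 0, …, n−1. -/
open Complex Filter Set

section NontangentialAux

lemma tan_abs_eq {x : ℝ} (hx : |x| < Real.pi / 2) : Real.tan |x| = |Real.tan x| := by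
  rcases abs_cases x with ⟨h1, h2⟩ | ⟨h1, h2⟩
  · rw [h1, _root_.abs_of_nonneg (Real.tan_nonneg_of_nonneg_of_le_pi_div_two h2 (by rw [← h1]; exact hx.le))]
  · rw [h1, Real.tan_neg, _root_.abs_of_nonpos
      (Real.tan_nonpos_of_nonpos_of_neg_pi_div_two_le h2.le
        (by rw [_root_.abs_of_nonpos h2.le] at hx; linarith))]

lemma arg_abs_lt_iff {α : ℝ} (hα : 0 < α) (hα' : α < Real.pi / 2) {w : ℂ} (hw : w ≠ 0) :
    |Complex.arg w| < α ↔ 0 < w.re ∧ |w.im| < Real.tan α * w.re := by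
  have hmemα : α ∈ Set.Ioo (-(Real.pi/2)) (Real.pi/2) := ⟨by linarith [Real.pi_pos], hα'⟩
  have key : 0 < w.re → (|Complex.arg w| < α ↔ |w.im| < Real.tan α * w.re) := by
    intro hre
    have habs : |Complex.arg w| < Real.pi / 2 :=
      Complex.abs_arg_lt_pi_div_two_iff.mpr (Or.inl hre)
    have hmemw : |Complex.arg w| ∈ Set.Ioo (-(Real.pi/2)) (Real.pi/2) :=
      ⟨lt_of_lt_of_le (by linarith [Real.pi_pos]) (abs_nonneg _), habs⟩
    rw [← Real.strictMonoOn_tan.lt_iff_lt hmemw hmemα, tan_abs_eq habs, Complex.tan_arg,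
      abs_div, abs_of_pos hre, div_lt_iff₀ hre]
  constructor
  · intro h
    have hre : 0 < w.re := by
      rcases Complex.abs_arg_lt_pi_div_two_iff.mp (h.trans hα') with h' | h'
      · exact h'
      · exact absurd h' hw
    exact ⟨hre, (key hre).mp h⟩
  · rintro ⟨hre, h⟩
    exact (key hre).mpr h


lemma combo_pos {a b rx ry : ℝ} (ha : 0 ≤ a) (hb : 0 ≤ b) (hab : a + b = 1)
    (hx : 0 < rx) (hy : 0 < ry) : 0 < a * rx + b * ry := by
  rcases ha.lt_or_eq with h | h
  · exact add_pos_of_pos_of_nonneg (mul_pos h hx) (mul_nonneg hb hy.le)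
  · have hb1 : b = 1 := by linarith
    rw [← h, hb1]; simpa using hy

lemma combo_lt {a b u v s t : ℝ} (ha : 0 ≤ a) (hb : 0 ≤ b) (hab : a + b = 1)
    (h1 : u < s) (h2 : v < t) : a * u + b * v < a * s + b * t := by
  rcases ha.lt_or_eq with h | h
  · have h3 := mul_lt_mul_of_pos_left h1 h
    have h4 := mul_le_mul_of_nonneg_left h2.le hb
    linarith
  · have hb1 : b = 1 := by linarith
    rw [← h, hb1]; simpa using h2

def ntR (t₀ : ℂ) (α δ : ℝ) : Set ℂ :=
  {z | 0 < ((z - t₀)/(-t₀)).re ∧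
       |((z - t₀)/(-t₀)).im| < Real.tan α * ((z - t₀)/(-t₀)).re ∧ ‖z - t₀‖ < δ}

def ntS (t₀ : ℂ) (ε α : ℝ) : Set ℂ :=
  {z : ℂ | (‖z‖ < 1 ∧ 0 < ‖z - t₀‖ ∧ ‖z - t₀‖ < ε) ∧ |Complex.arg ((z - t₀) / (-t₀))| < α}

def ntU (t₀ : ℂ) (ε : ℝ) : Set ℂ := {z : ℂ | ‖z‖ < 1 ∧ 0 < ‖z - t₀‖ ∧ ‖z - t₀‖ < ε}

lemma ntR_convex (t₀ : ℂ) (ht₀ : t₀ ≠ 0) (α δ : ℝ) : Convex ℝ (ntR t₀ α δ) := by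
  have hne : (-t₀) ≠ 0 := neg_ne_zero.mpr ht₀
  intro x hx y hy a b ha hb hab
  obtain ⟨hx1, hx2, hx3⟩ := hx
  obtain ⟨hy1, hy2, hy3⟩ := hy
  have hab' : (a : ℂ) + b = 1 := by exact_mod_cast congrArg (Complex.ofReal) hab
  have key : ((a • x + b • y) - t₀)/(-t₀) = a • ((x - t₀)/(-t₀)) + b • ((y - t₀)/(-t₀)) := by
    simp only [Complex.real_smul]
    rw [div_eq_iff hne, add_mul, mul_assoc, mul_assoc, div_mul_cancel₀ _ hne,
      div_mul_cancel₀ _ hne]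
    linear_combination t₀ * hab'
  refine ⟨?_, ?_, ?_⟩
  · show 0 < _
    rw [key]
    simp only [Complex.add_re, Complex.smul_re, smul_eq_mul]
    exact combo_pos ha hb hab hx1 hy1
  · show |_| < _
    rw [key]
    simp only [Complex.add_re, Complex.add_im, Complex.smul_re, Complex.smul_im, smul_eq_mul]
    calc |a * ((x - t₀)/(-t₀)).im + b * ((y - t₀)/(-t₀)).im|
        ≤ a * |((x - t₀)/(-t₀)).im| + b * |((y - t₀)/(-t₀)).im| := by
          refine (abs_add_le _ _).trans ?_
          rw [abs_mul, abs_mul, _root_.abs_of_nonneg ha, _root_.abs_of_nonneg hb]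
      _ < a * (Real.tan α * ((x - t₀)/(-t₀)).re) + b * (Real.tan α * ((y - t₀)/(-t₀)).re) :=
          combo_lt ha hb hab hx2 hy2
      _ = Real.tan α * (a * ((x - t₀)/(-t₀)).re + b * ((y - t₀)/(-t₀)).re) := by ring
  · show ‖_‖ < δ
    have := convex_ball t₀ δ (mem_ball_iff_norm.mpr hx3) (mem_ball_iff_norm.mpr hy3) ha hb hab
    exact mem_ball_iff_norm.mp this

lemma ntR_isOpen (t₀ : ℂ) (α δ : ℝ) : IsOpen (ntR t₀ α δ) := by
  have hc : Continuous fun z : ℂ => (z - t₀)/(-t₀) :=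
    (continuous_id.sub continuous_const).div_const _
  exact (isOpen_lt continuous_const (Complex.continuous_re.comp hc)).and
    (((isOpen_lt (Complex.continuous_im.comp hc).abs
        (continuous_const.mul (Complex.continuous_re.comp hc))).and
      (isOpen_lt (continuous_id.sub continuous_const).norm continuous_const)))


/-- ntR is inside the disk/annulus region. -/
lemma ntR_subset {t₀ : ℂ} (ht₀ : ‖t₀‖ = 1) {ε α δ : ℝ} (hα : 0 < α) (hα' : α < Real.pi / 2)
    (hδε : δ ≤ ε) (hδc : δ ≤ Real.cos α) {z : ℂ} (hz : z ∈ ntR t₀ α δ) :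
    ‖z‖ < 1 ∧ 0 < ‖z - t₀‖ ∧ ‖z - t₀‖ < ε := by
  have ht0 : t₀ ≠ 0 := by intro h; rw [h] at ht₀; simp at ht₀
  have hne : (-t₀) ≠ 0 := neg_ne_zero.mpr ht0
  obtain ⟨h1, h2, h3⟩ := hz
  set w : ℂ := (z - t₀)/(-t₀) with hw
  set r : ℝ := w.re
  set i : ℝ := w.im
  have habs1 : ‖t₀‖ = 1 := by exact ht₀
  have hA : ‖z - t₀‖ = ‖w‖ := by
    rw [hw]
    simp [map_div₀, habs1]
  set A : ℝ := ‖w‖ with hAdef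
  have hrA : r ≤ A := Complex.re_le_norm w
  have hr0 : 0 < r := h1
  have hA0 : 0 < A := lt_of_lt_of_le hr0 hrA
  have hApos : 0 < ‖z - t₀‖ := by rw [hA]; exact hA0
  refine ⟨?_, hApos, lt_of_lt_of_le h3 hδε⟩
  -- the main estimate
  have hc : 0 < Real.cos α := Real.cos_pos_of_mem_Ioo ⟨by linarith [Real.pi_pos], hα'⟩
  have hs : 0 < Real.sin α := Real.sin_pos_of_pos_of_lt_pi hα (by linarith [Real.pi_pos])
  have htan : Real.tan α = Real.sin α / Real.cos α := Real.tan_eq_sin_div_cos α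
  have hi : Real.cos α * |i| < Real.sin α * r := by
    have := h2
    rw [htan, div_mul_eq_mul_div, lt_div_iff₀ hc] at this
    linarith [this]
  have hi2 : Real.cos α ^ 2 * i ^ 2 < Real.sin α ^ 2 * r ^ 2 := by
    have h4 : (Real.cos α * |i|) ^ 2 < (Real.sin α * r) ^ 2 := by
      have hnn : 0 ≤ Real.cos α * |i| := mul_nonneg hc.le (abs_nonneg i)
      exact pow_lt_pow_left₀ hi hnn (n := 2) (by norm_num)
    calc Real.cos α ^ 2 * i ^ 2 = (Real.cos α * |i|) ^ 2 := by rw [mul_pow, _root_.sq_abs]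
      _ < (Real.sin α * r) ^ 2 := h4
      _ = Real.sin α ^ 2 * r ^ 2 := by ring
  have hA2 : A ^ 2 = r ^ 2 + i ^ 2 := by
    rw [hAdef, Complex.sq_norm, Complex.normSq_apply]; ring
  have hsc : Real.sin α ^ 2 + Real.cos α ^ 2 = 1 := Real.sin_sq_add_cos_sq α
  have hz1 : z = t₀ * (1 - w) := by
    have : w * (-t₀) = z - t₀ := div_mul_cancel₀ _ hne
    linear_combination -this
  have hnz : ‖z‖ ^ 2 = (1 - r) ^ 2 + i ^ 2 := by
    rw [hz1, norm_mul, habs1, one_mul,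
      Complex.sq_norm, Complex.normSq_apply]
    simp only [Complex.sub_re, Complex.sub_im, Complex.one_re, Complex.one_im]
    ring
  clear_value w r i A
  clear hw hAdef hz1
  -- c*A < r
  have h5 : (Real.cos α * A) ^ 2 = Real.cos α ^ 2 * r ^ 2 + Real.cos α ^ 2 * i ^ 2 := by
    rw [mul_pow, hA2]; ring
  have h7 : Real.sin α ^ 2 * r ^ 2 + Real.cos α ^ 2 * r ^ 2 = r ^ 2 := by
    linear_combination r ^ 2 * hsc
  have h6 : (Real.cos α * A) ^ 2 < r ^ 2 := by rw [h5]; linarith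
  have hcA : Real.cos α * A < r := lt_of_pow_lt_pow_left₀ 2 hr0.le h6
  have hAδ : A < δ := hA ▸ h3
  have hAc : A < Real.cos α := lt_of_lt_of_le hAδ hδc
  have h8 : A * A < Real.cos α * A := mul_lt_mul_of_pos_right hAc hA0
  have hA2r : A ^ 2 < r := by rw [sq]; linarith
  -- ‖z‖ < 1
  have h9 : ‖z‖ ^ 2 < 1 := by
    rw [hnz]
    have e : (1 - r) ^ 2 + i ^ 2 = 1 - 2 * r + (r ^ 2 + i ^ 2) := by ring
    rw [e, ← hA2]
    linarith
  calc ‖z‖ = ‖z‖ := rfl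
    _ < 1 := lt_of_pow_lt_pow_left₀ 2 zero_le_one (by simpa using h9)


lemma t0_ne_zero {t₀ : ℂ} (ht₀ : ‖t₀‖ = 1) : t₀ ≠ 0 := by
  intro h; rw [h] at ht₀; simp at ht₀

lemma mem_ntR_of_mem_ntS {t₀ : ℂ} (ht₀ : ‖t₀‖ = 1) {ε α δ : ℝ} (hα : 0 < α)
    (hα' : α < Real.pi / 2) {z : ℂ} (hz : z ∈ ntS t₀ ε α) (hδ : ‖z - t₀‖ < δ) :
    z ∈ ntR t₀ α δ := by
  obtain ⟨⟨_, hz2, _⟩, harg⟩ := hz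
  have hsub : z - t₀ ≠ 0 := by
    intro h; rw [h] at hz2; simp at hz2
  have hw : (z - t₀)/(-t₀) ≠ 0 :=
    div_ne_zero hsub (neg_ne_zero.mpr (t0_ne_zero ht₀))
  obtain ⟨h1, h2⟩ := (arg_abs_lt_iff hα hα' hw).mp harg
  exact ⟨h1, h2, hδ⟩

lemma ntR_subset_ntS {t₀ : ℂ} (ht₀ : ‖t₀‖ = 1) {ε α δ : ℝ} (hα : 0 < α)
    (hα' : α < Real.pi / 2) (hδε : δ ≤ ε) (hδc : δ ≤ Real.cos α) :
    ntR t₀ α δ ⊆ ntS t₀ ε α := by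
  intro z hz
  refine ⟨ntR_subset ht₀ hα hα' hδε hδc hz, ?_⟩
  have hw : (z - t₀)/(-t₀) ≠ 0 := by
    intro h
    have := hz.1
    rw [h] at this
    simp at this
  exact (arg_abs_lt_iff hα hα' hw).mpr ⟨hz.1, hz.2.1⟩

/-- the base point `t₀ * (1 - s)` for real `0 < s`. -/
lemma base_mem_ntR {t₀ : ℂ} (ht₀ : ‖t₀‖ = 1) {α δ s : ℝ} (hα : 0 < α) (hα' : α < Real.pi / 2)
    (hs : 0 < s) (hsδ : s < δ) : (t₀ * (1 - (s : ℂ))) ∈ ntR t₀ α δ := by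
  have ht0 : t₀ ≠ 0 := t0_ne_zero ht₀
  have hkey : ((t₀ * (1 - (s : ℂ))) - t₀) / (-t₀) = (s : ℂ) := by
    rw [div_eq_iff (neg_ne_zero.mpr ht0)]
    ring
  have htan : 0 < Real.tan α :=
    Real.tan_pos_of_pos_of_lt_pi_div_two hα hα'
  refine ⟨?_, ?_, ?_⟩
  · show 0 < _
    rw [hkey]
    simpa using hs
  · show |_| < _
    rw [hkey]
    simp only [Complex.ofReal_re, Complex.ofReal_im, abs_zero]
    positivity
  · show ‖_‖ < δ
    have : t₀ * (1 - (s : ℂ)) - t₀ = -(t₀ * s) := by ring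
    rw [this, norm_neg, norm_mul, ht₀, one_mul, Complex.norm_real]
    rwa [Real.norm_eq_abs, _root_.abs_of_pos hs]

lemma ntS_neBot {t₀ : ℂ} (ht₀ : ‖t₀‖ = 1) {ε α : ℝ} (hε : 0 < ε) (hα : 0 < α) :
    (nhdsWithin t₀ (ntS t₀ ε α)).NeBot := by
  rw [← mem_closure_iff_nhdsWithin_neBot]
  have htend : Tendsto (fun s : ℝ => t₀ * (1 - (s : ℂ))) (nhdsWithin 0 (Set.Ioi 0)) (nhds t₀) := by
    apply Tendsto.mono_left _ nhdsWithin_le_nhds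
    have : Continuous fun s : ℝ => t₀ * (1 - (s : ℂ)) := by continuity
    simpa using this.tendsto 0
  refine mem_closure_of_tendsto htend ?_
  have hmem : Set.Ioo (0:ℝ) (min ε 1) ∈ nhdsWithin (0:ℝ) (Set.Ioi 0) :=
    Ioo_mem_nhdsGT_of_mem ⟨le_refl _, lt_min hε one_pos⟩
  filter_upwards [hmem] with s hs
  obtain ⟨hs0, hs1⟩ := hs
  have hsε : s < ε := lt_of_lt_of_le hs1 (min_le_left _ _)
  have hs1' : s < 1 := lt_of_lt_of_le hs1 (min_le_right _ _)
  have hkey : ((t₀ * (1 - (s : ℂ))) - t₀) = -(t₀ * s) := by ring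
  have hnorm : ‖(t₀ * (1 - (s : ℂ))) - t₀‖ = s := by
    rw [hkey, norm_neg, norm_mul, ht₀, one_mul, Complex.norm_real, Real.norm_eq_abs,
      _root_.abs_of_pos hs0]
  have harg : ((t₀ * (1 - (s : ℂ))) - t₀) / (-t₀) = (s : ℂ) := by
    have ht0 : t₀ ≠ 0 := t0_ne_zero ht₀
    rw [div_eq_iff (neg_ne_zero.mpr ht0)]
    ring
  refine ⟨⟨?_, ?_, ?_⟩, ?_⟩
  · rw [norm_mul, ht₀, one_mul]
    have : (1 : ℂ) - (s:ℂ) = ((1 - s : ℝ) : ℂ) := by push_cast; ring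
    rw [this, Complex.norm_real, Real.norm_eq_abs, _root_.abs_of_pos (by linarith)]
    linarith
  · rw [hnorm]; exact hs0
  · rw [hnorm]; exact hsε
  · rw [harg]
    rw [Complex.arg_ofReal_of_nonneg hs0.le]
    simpa using hα


variable {B : Type*} [NormedAddCommGroup B] [NormedSpace ℂ B] [CompleteSpace B]

/-- Lipschitz estimate plus basepoint data on a small wedge. -/
lemma nt_lip {t₀ : ℂ} (ht₀ : ‖t₀‖ = 1) {ε : ℝ} (hε : 0 < ε) (g : ℂ → B)
    (hg : ∀ z ∈ ntU t₀ ε, DifferentiableAt ℂ g z)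
    (hb : ∀ α : ℝ, 0 < α → α < Real.pi / 2 → ∃ γ δ : ℝ, 0 < δ ∧ ∀ z ∈ ntU t₀ ε,
      |Complex.arg ((z - t₀)/(-t₀))| < α → ‖z - t₀‖ < δ → ‖deriv g z‖ ≤ γ)
    {α : ℝ} (hα : 0 < α) (hα' : α < Real.pi / 2) :
    ∃ γ δ : ℝ, 0 ≤ γ ∧ 0 < δ ∧ δ ≤ ε ∧ δ ≤ Real.cos α ∧
      ∀ x ∈ ntR t₀ α δ, ∀ y ∈ ntR t₀ α δ, ‖g y - g x‖ ≤ γ * ‖y - x‖ := by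
  obtain ⟨γ, δ₀, hδ₀, hbound⟩ := hb α hα hα'
  have hc : 0 < Real.cos α := Real.cos_pos_of_mem_Ioo ⟨by linarith [Real.pi_pos], hα'⟩
  set δ : ℝ := min δ₀ (min ε (Real.cos α)) with hδdef
  have hδpos : 0 < δ := lt_min hδ₀ (lt_min hε hc)
  have hδε : δ ≤ ε := le_trans (min_le_right _ _) (min_le_left _ _)
  have hδc : δ ≤ Real.cos α := le_trans (min_le_right _ _) (min_le_right _ _)
  have hδ0' : δ ≤ δ₀ := min_le_left _ _
  have hRU : ntR t₀ α δ ⊆ ntU t₀ ε := fun z hz => ntR_subset ht₀ hα hα' hδε hδc hz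
  have hRS : ntR t₀ α δ ⊆ ntS t₀ ε α := ntR_subset_ntS ht₀ hα hα' hδε hδc
  -- base point for nonnegativity of γ
  have hz₀ : (t₀ * (1 - ((δ/2 : ℝ) : ℂ))) ∈ ntR t₀ α δ :=
    base_mem_ntR ht₀ hα hα' (by linarith) (by linarith)
  have hγ0 : 0 ≤ γ := by
    refine le_trans (norm_nonneg _) (hbound _ (hRU hz₀) (hRS hz₀).2 ?_)
    exact lt_of_lt_of_le hz₀.2.2 hδ0'
  refine ⟨γ, δ, hγ0, hδpos, hδε, hδc, ?_⟩
  intro x hx y hy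
  refine (ntR_convex t₀ (t0_ne_zero ht₀) α δ).norm_image_sub_le_of_norm_fderivWithin_le
    (fun z hz => (hg z (hRU hz)).differentiableWithinAt) ?_ hx hy
  intro z hz
  rw [fderivWithin_of_isOpen (ntR_isOpen t₀ α δ) hz]
  have hd : HasDerivAt g (deriv g z) z := (hg z (hRU hz)).hasDerivAt
  rw [hd.hasFDerivAt.fderiv]
  calc ‖ContinuousLinearMap.smulRight (1 : ℂ →L[ℂ] ℂ) (deriv g z)‖ = ‖deriv g z‖ := by
        simp [ContinuousLinearMap.norm_smulRight_apply]
    _ ≤ γ := hbound z (hRU hz) (hRS hz).2 (lt_of_lt_of_le hz.2.2 hδ0')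

/-- bounded derivative nontangentially near t₀ implies g itself bounded nontangentially,
and g has a single nontangential limit. -/
lemma nt_step {t₀ : ℂ} (ht₀ : ‖t₀‖ = 1) {ε : ℝ} (hε : 0 < ε) (g : ℂ → B)
    (hg : ∀ z ∈ ntU t₀ ε, DifferentiableAt ℂ g z)
    (hb : ∀ α : ℝ, 0 < α → α < Real.pi / 2 → ∃ γ δ : ℝ, 0 < δ ∧ ∀ z ∈ ntU t₀ ε,
      |Complex.arg ((z - t₀)/(-t₀))| < α → ‖z - t₀‖ < δ → ‖deriv g z‖ ≤ γ) :
    (∀ α : ℝ, 0 < α → α < Real.pi / 2 → ∃ γ δ : ℝ, 0 < δ ∧ ∀ z ∈ ntU t₀ ε,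
      |Complex.arg ((z - t₀)/(-t₀))| < α → ‖z - t₀‖ < δ → ‖g z‖ ≤ γ) ∧
    (∃ L : B, ∀ α : ℝ, 0 < α → α < Real.pi / 2 →
      Tendsto g (nhdsWithin t₀ (ntS t₀ ε α)) (nhds L)) := by
  constructor
  · -- boundedness of g
    intro α hα hα'
    obtain ⟨γ, δ, hγ0, hδpos, hδε, hδc, hlip⟩ := nt_lip ht₀ hε g hg hb hα hα'
    have hz₀ : (t₀ * (1 - ((δ/2 : ℝ) : ℂ))) ∈ ntR t₀ α δ :=
      base_mem_ntR ht₀ hα hα' (by linarith) (by linarith)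
    set z₀ : ℂ := t₀ * (1 - ((δ/2 : ℝ) : ℂ))
    refine ⟨‖g z₀‖ + γ * (2 * δ), δ, hδpos, ?_⟩
    intro z hzU harg hδz
    have hzR : z ∈ ntR t₀ α δ := mem_ntR_of_mem_ntS ht₀ hα hα' ⟨hzU, harg⟩ hδz
    have h1 : ‖g z - g z₀‖ ≤ γ * ‖z - z₀‖ := hlip z₀ hz₀ z hzR
    have h2 : ‖z - z₀‖ ≤ 2 * δ := by
      have h3 : ‖z - z₀‖ ≤ ‖z - t₀‖ + ‖z₀ - t₀‖ := by
        have := norm_sub_le (z - t₀) (z₀ - t₀)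
        simpa using this
      have h4 := hzR.2.2
      have h5 := hz₀.2.2
      linarith
    have h6 : ‖g z‖ ≤ ‖g z₀‖ + ‖g z - g z₀‖ := by
      have := norm_add_le (g z₀) (g z - g z₀)
      simpa using this
    have h7 : γ * ‖z - z₀‖ ≤ γ * (2 * δ) := mul_le_mul_of_nonneg_left h2 hγ0
    linarith
  · -- existence of the limit
    have main : ∀ α : ℝ, 0 < α → α < Real.pi / 2 →
        ∃ L : B, Tendsto g (nhdsWithin t₀ (ntS t₀ ε α)) (nhds L) := by
      intro α hα hα'
      obtain ⟨γ, δ, hγ0, hδpos, hδε, hδc, hlip⟩ := nt_lip ht₀ hε g hg hb hα hα'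
      have hF : (nhdsWithin t₀ (ntS t₀ ε α)).NeBot := ntS_neBot ht₀ hε hα
      have hcauchy : Cauchy (Filter.map g (nhdsWithin t₀ (ntS t₀ ε α))) := by
        rw [Metric.cauchy_iff]
        refine ⟨Filter.map_neBot, ?_⟩
        intro e he
        set r : ℝ := min δ (e / (2 * (γ + 1))) with hrdef
        have hγ1 : 0 < γ + 1 := by linarith
        have hrpos : 0 < r := lt_min hδpos (by positivity)
        have hTmem : ntS t₀ ε α ∩ Metric.ball t₀ r ∈ nhdsWithin t₀ (ntS t₀ ε α) :=
          inter_mem self_mem_nhdsWithin (nhdsWithin_le_nhds (Metric.ball_mem_nhds _ hrpos))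
        refine ⟨g '' (ntS t₀ ε α ∩ Metric.ball t₀ r), ?_, ?_⟩
        · exact Filter.image_mem_map hTmem
        · rintro x ⟨z₁, hz₁, rfl⟩ y ⟨z₂, hz₂, rfl⟩
          have hz₁R : z₁ ∈ ntR t₀ α δ :=
            mem_ntR_of_mem_ntS ht₀ hα hα' hz₁.1
              (lt_of_lt_of_le (mem_ball_iff_norm.mp hz₁.2) (min_le_left _ _))
          have hz₂R : z₂ ∈ ntR t₀ α δ :=
            mem_ntR_of_mem_ntS ht₀ hα hα' hz₂.1
              (lt_of_lt_of_le (mem_ball_iff_norm.mp hz₂.2) (min_le_left _ _))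
          have h1 : dist (g z₁) (g z₂) = ‖g z₁ - g z₂‖ := dist_eq_norm _ _
          have h2 : ‖g z₁ - g z₂‖ ≤ γ * ‖z₁ - z₂‖ := hlip z₂ hz₂R z₁ hz₁R
          have h3 : ‖z₁ - z₂‖ ≤ ‖z₁ - t₀‖ + ‖z₂ - t₀‖ := by
            have := norm_sub_le (z₁ - t₀) (z₂ - t₀)
            simpa using this
          have h4 : ‖z₁ - t₀‖ < r := mem_ball_iff_norm.mp hz₁.2
          have h5 : ‖z₂ - t₀‖ < r := mem_ball_iff_norm.mp hz₂.2
          have h6 : r ≤ e / (2 * (γ + 1)) := min_le_right _ _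
          have h7 : γ * ‖z₁ - z₂‖ ≤ γ * (2 * r) := by
            apply mul_le_mul_of_nonneg_left _ hγ0
            linarith
          have h8 : γ * (2 * r) < e := by
            have h9 : γ * (2 * r) ≤ γ * (2 * (e / (2 * (γ + 1)))) := by
              apply mul_le_mul_of_nonneg_left _ hγ0
              linarith
            have hq : (e / (2 * (γ + 1))) * (2 * (γ + 1)) = e :=
              div_mul_cancel₀ e (by positivity)
            have hqpos : 0 < e / (2 * (γ + 1)) := by positivity
            nlinarith [hq, hqpos, hγ0, h9]
          rw [h1]
          linarith
      obtain ⟨L, hL⟩ := CompleteSpace.complete hcauchy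
      exact ⟨L, hL⟩
    obtain ⟨L, hL⟩ := main (Real.pi/4) (by linarith [Real.pi_pos]) (by linarith [Real.pi_pos])
    refine ⟨L, ?_⟩
    intro α hα hα'
    have hmono : ∀ {a b : ℝ}, a ≤ b → ntS t₀ ε a ⊆ ntS t₀ ε b := by
      intro a b hab z hz
      exact ⟨hz.1, lt_of_lt_of_le hz.2 hab⟩
    rcases le_or_gt α (Real.pi/4) with hle | hlt
    · exact hL.mono_left (nhdsWithin_mono _ (hmono hle))
    · obtain ⟨L', hL'⟩ := main α hα hα'
      have h1 : Tendsto g (nhdsWithin t₀ (ntS t₀ ε (Real.pi/4))) (nhds L') :=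
        hL'.mono_left (nhdsWithin_mono _ (hmono hlt.le))
      haveI : (nhdsWithin t₀ (ntS t₀ ε (Real.pi/4))).NeBot :=
        ntS_neBot ht₀ hε (by linarith [Real.pi_pos])
      have : L' = L := tendsto_nhds_unique h1 hL
      rwa [this] at hL'

end NontangentialAux

/-- If a Banach-space-valued function `f`, holomorphic on the punctured neighborhood
`U_{t₀,ε} = {z ∈ 𝔻 : 0 < |z - t₀| < ε}` of a boundary point `t₀`, has its `n`-th derivative
bounded in every Stolz angle at `t₀`, then the nontangential limits of `f^{(j)}` at `t₀`
exist for all `j = 0, …, n-1` (each limit being independent of the Stolz angle). -/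
theorem nontangential_limits_of_bounded_derivative
    {B : Type*} [NormedAddCommGroup B] [NormedSpace ℂ B] [CompleteSpace B]
    (f : ℂ → B) (t₀ : ℂ) (ht₀ : ‖t₀‖ = 1) (ε : ℝ) (hε : 0 < ε) (n : ℕ) (hn : 1 ≤ n)
    (hf : DifferentiableOn ℂ f
      {z : ℂ | ‖z‖ < 1 ∧ 0 < ‖z - t₀‖ ∧ ‖z - t₀‖ < ε})
    (hbdd : ∀ α : ℝ, 0 < α → α < Real.pi / 2 →
      ∃ γ : ℝ, ∀ z : ℂ,
        (‖z‖ < 1 ∧ 0 < ‖z - t₀‖ ∧ ‖z - t₀‖ < ε) →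
        |Complex.arg ((z - t₀) / (-t₀))| < α →
        ‖iteratedDeriv n f z‖ ≤ γ) :
    ∀ j : ℕ, j ≤ n - 1 →
      ∃ L : B, ∀ α : ℝ, 0 < α → α < Real.pi / 2 →
        Tendsto (iteratedDeriv j f)
          (nhdsWithin t₀
            {z : ℂ | (‖z‖ < 1 ∧ 0 < ‖z - t₀‖ ∧ ‖z - t₀‖ < ε)
              ∧ |Complex.arg ((z - t₀) / (-t₀))| < α})
          (nhds L) := by
  have hUopen : IsOpen (ntU t₀ ε) :=
    (isOpen_lt continuous_norm continuous_const).and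
      ((isOpen_lt continuous_const (continuous_id.sub continuous_const).norm).and
        (isOpen_lt (continuous_id.sub continuous_const).norm continuous_const))
  have hanal : ∀ j : ℕ, AnalyticOnNhd ℂ (iteratedDeriv j f) (ntU t₀ ε) := by
    intro j
    induction j with
    | zero =>
      rw [iteratedDeriv_zero]
      exact DifferentiableOn.analyticOnNhd hf hUopen
    | succ k ih =>
      rw [iteratedDeriv_succ]
      exact ih.deriv
  have hdiff : ∀ j : ℕ, ∀ z ∈ ntU t₀ ε, DifferentiableAt ℂ (iteratedDeriv j f) z :=
    fun j z hz => (hanal j z hz).differentiableAt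
  set P : ℕ → Prop := fun k => ∀ α : ℝ, 0 < α → α < Real.pi / 2 → ∃ γ δ : ℝ, 0 < δ ∧
    ∀ z ∈ ntU t₀ ε, |Complex.arg ((z - t₀)/(-t₀))| < α → ‖z - t₀‖ < δ →
      ‖iteratedDeriv k f z‖ ≤ γ with hPdef
  have hPn : P n := by
    intro α hα hα'
    obtain ⟨γ, hγ⟩ := hbdd α hα hα'
    exact ⟨γ, ε, hε, fun z hz harg _ => hγ z hz harg⟩
  have hPdown : ∀ k : ℕ, P (k + 1) → P k := by
    intro k hPk1
    have hb : ∀ α : ℝ, 0 < α → α < Real.pi / 2 → ∃ γ δ : ℝ, 0 < δ ∧ ∀ z ∈ ntU t₀ ε,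
        |Complex.arg ((z - t₀)/(-t₀))| < α → ‖z - t₀‖ < δ →
        ‖deriv (iteratedDeriv k f) z‖ ≤ γ := by
      intro α hα hα'
      obtain ⟨γ, δ, hδ, h⟩ := hPk1 α hα hα'
      refine ⟨γ, δ, hδ, fun z hz harg hd => ?_⟩
      rw [← iteratedDeriv_succ]
      exact h z hz harg hd
    exact (nt_step ht₀ hε (iteratedDeriv k f) (hdiff k) hb).1
  have hPm : ∀ m : ℕ, P (n - m) := by
    intro m
    induction m with
    | zero => simpa using hPn
    | succ l ih =>
      by_cases h : n ≤ l
      · have he : n - (l + 1) = n - l := by omega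
        rw [he]; exact ih
      · have he : n - l = (n - (l + 1)) + 1 := by omega
        exact hPdown _ (he ▸ ih)
  intro j hj
  have hPj1 : P (j + 1) := by
    have := hPm (n - (j + 1))
    rwa [show n - (n - (j + 1)) = j + 1 by omega] at this
  have hb : ∀ α : ℝ, 0 < α → α < Real.pi / 2 → ∃ γ δ : ℝ, 0 < δ ∧ ∀ z ∈ ntU t₀ ε,
      |Complex.arg ((z - t₀)/(-t₀))| < α → ‖z - t₀‖ < δ →
      ‖deriv (iteratedDeriv j f) z‖ ≤ γ := by
    intro α hα hα'
    obtain ⟨γ, δ, hδ, h⟩ := hPj1 α hα hα'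
    refine ⟨γ, δ, hδ, fun z hz harg hd => ?_⟩
    rw [← iteratedDeriv_succ]
    exact h z hz harg hd
  exact (nt_step ht₀ hε (iteratedDeriv j f) (hdiff j) hb).2
end
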